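/- arXiv:1610.00833 — 5 statements merged into one kernel-verified Lean document; each statement's English description precedes it below -/
import Mathlib

section
/- Let a, b be positive integers and A a nonnegative symmetric irreducible n×n real matrix with largest eigenvalue μ. Let μ' be the largest root of f(x) = x² - ax - b, let B = f(A) = A² - aA - bI, and let B_j = Σ_{i=1}^n B_{ij} denote the j-th column sum of B. If B_j ≤ 0 for all j = 1, …, n, then μ ≤ μ', with equality if and only if B_j = 0 for all j. -/
open Matrix
open Pointwise


lemma psd_shift {n : ℕ} (A : Matrix (Fin n) (Fin n) ℝ) (hsymm : A.IsSymm) (μ : ℝ)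
    (hμmax : ∀ x ∈ spectrum ℝ A, x ≤ μ) :
    (μ • (1 : Matrix (Fin n) (Fin n) ℝ) - A).PosSemidef := by
  set M := μ • (1 : Matrix (Fin n) (Fin n) ℝ) - A with hM
  have hAh : A.IsHermitian := by
    have : Aᴴ = Aᵀ := by ext i j; simp [Matrix.conjTranspose_apply]
    rw [Matrix.IsHermitian, this, hsymm.eq]
  have hMsym : M.IsHermitian := by
    rw [hM, Matrix.IsHermitian, conjTranspose_sub, conjTranspose_smul, conjTranspose_one,
      hAh.eq, star_trivial]
  refine (Matrix.IsHermitian.posSemidef_iff_eigenvalues_nonneg hMsym).mpr fun i => ?_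
  have hmem := hMsym.eigenvalues_mem_spectrum_real i
  have hMalg : M = algebraMap ℝ (Matrix (Fin n) (Fin n) ℝ) μ - A := by
    rw [Algebra.algebraMap_eq_smul_one]
  have hmem' : hMsym.eigenvalues i ∈ ({μ} : Set ℝ) - spectrum ℝ A := by
    rw [spectrum.singleton_sub_eq, ← hMalg]; exact hmem
  obtain ⟨x, hx, y, hy, hxy⟩ := hmem'
  simp only [Set.mem_singleton_iff] at hx
  subst hx
  have hxy' : x - y = hMsym.eigenvalues i := hxy
  exact (show (0 : ℝ) ≤ hMsym.eigenvalues i by linarith [hμmax y hy])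

lemma eigvec_exists {n : ℕ} (A : Matrix (Fin n) (Fin n) ℝ) (μ : ℝ) (hμ : μ ∈ spectrum ℝ A) :
    ∃ w, w ≠ 0 ∧ A *ᵥ w = μ • w := by
  have h := spectrum.mem_iff.mp hμ
  rw [Matrix.isUnit_iff_isUnit_det] at h
  have hdet : ((algebraMap ℝ _ μ : Matrix (Fin n) (Fin n) ℝ) - A).det = 0 := by
    by_contra hc; exact h (isUnit_iff_ne_zero.mpr hc)
  obtain ⟨w, hw0, hw⟩ := (Matrix.exists_mulVec_eq_zero_iff).mpr hdet
  refine ⟨w, hw0, ?_⟩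
  rw [Matrix.sub_mulVec, Algebra.algebraMap_eq_smul_one, Matrix.smul_mulVec,
    Matrix.one_mulVec] at hw
  exact (sub_eq_zero.mp hw).symm

lemma pos_eigvec {n : ℕ} (A : Matrix (Fin n) (Fin n) ℝ)
    (hnonneg : ∀ i j, 0 ≤ A i j) (hsymm : A.IsSymm)
    (hirr : ∀ S : Set (Fin n), S.Nonempty → S ≠ Set.univ → ∃ i ∈ S, ∃ j ∉ S, A i j ≠ 0)
    (μ : ℝ) (hμmem : μ ∈ spectrum ℝ A) (hμmax : ∀ x ∈ spectrum ℝ A, x ≤ μ)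
    (hpsd : (μ • (1 : Matrix (Fin n) (Fin n) ℝ) - A).PosSemidef) :
    ∃ v : Fin n → ℝ, (∀ i, 0 < v i) ∧ A *ᵥ v = μ • v := by
  obtain ⟨w, hw0, hw⟩ := eigvec_exists A μ hμmem
  set v : Fin n → ℝ := fun i => |w i| with hv
  set M := μ • (1 : Matrix (Fin n) (Fin n) ℝ) - A with hM
  have hMw : M *ᵥ w = 0 := by
    rw [hM, Matrix.sub_mulVec, Matrix.smul_mulVec, Matrix.one_mulVec, hw, sub_self]
  -- quadratic form of v is ≤ that of w
  have hvv : v ⬝ᵥ v = w ⬝ᵥ w := by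
    unfold dotProduct
    exact Finset.sum_congr rfl fun i _ => by rw [hv]; simp [abs_mul_abs_self]
  have hAv : w ⬝ᵥ (A *ᵥ w) ≤ v ⬝ᵥ (A *ᵥ v) := by
    simp only [dotProduct, Matrix.mulVec, Finset.mul_sum]
    refine Finset.sum_le_sum fun i _ => Finset.sum_le_sum fun j _ => ?_
    have h1 : w i * w j ≤ |w i| * |w j| := by rw [← abs_mul]; exact le_abs_self _
    have h2 := hnonneg i j
    show w i * (A i j * w j) ≤ |w i| * (A i j * |w j|)
    nlinarith
  -- quadratic form of v vanishes
  have hqv : v ⬝ᵥ (M *ᵥ v) = 0 := by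
    have hle : v ⬝ᵥ (M *ᵥ v) ≤ 0 := by
      have hexp : ∀ u : Fin n → ℝ, u ⬝ᵥ (M *ᵥ u) = μ * (u ⬝ᵥ u) - u ⬝ᵥ (A *ᵥ u) := by
        intro u
        rw [hM, Matrix.sub_mulVec, Matrix.smul_mulVec, Matrix.one_mulVec,
          dotProduct_sub, dotProduct_smul, smul_eq_mul]
      have h0 : w ⬝ᵥ (M *ᵥ w) = 0 := by rw [hMw, dotProduct_zero]
      rw [hexp v]
      rw [hexp w] at h0
      rw [hvv]
      linarith
    have hge := hpsd.dotProduct_mulVec_nonneg v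
    rw [star_trivial] at hge
    linarith
  have hMv : M *ᵥ v = 0 := by
    have := (hpsd.dotProduct_mulVec_zero_iff v).mp (by rw [star_trivial]; exact hqv)
    exact this
  have hAvv : A *ᵥ v = μ • v := by
    rw [hM, Matrix.sub_mulVec, Matrix.smul_mulVec, Matrix.one_mulVec] at hMv
    exact (sub_eq_zero.mp hMv).symm
  refine ⟨v, ?_, hAvv⟩
  -- positivity via irreducibility
  have hvnn : ∀ i, 0 ≤ v i := fun i => abs_nonneg _
  by_contra hcon
  push_neg at hcon
  set S : Set (Fin n) := {i | 0 < v i} with hS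
  have hSne : S.Nonempty := by
    by_contra hemp
    apply hw0
    funext i
    have : i ∉ S := fun h => hemp ⟨i, h⟩
    simp only [hS, Set.mem_setOf_eq, not_lt] at this
    have : v i = 0 := le_antisymm this (hvnn i)
    simpa [hv, abs_eq_zero] using this
  have hSne' : S ≠ Set.univ := by
    obtain ⟨i, hi⟩ := hcon
    intro h
    have : i ∈ S := h ▸ Set.mem_univ i
    exact hi.not_gt this
  obtain ⟨i, hiS, j, hjS, hAij⟩ := hirr S hSne hSne'
  have hvj : v j = 0 := by
    have : ¬ 0 < v j := hjS
    linarith [hvnn j, not_lt.mp this]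
  have hAji : 0 < A j i := lt_of_le_of_ne (hnonneg j i) (by rw [hsymm.apply]; exact Ne.symm hAij)
  have hpos : 0 < (A *ᵥ v) j := by
    have : (A *ᵥ v) j = ∑ k, A j k * v k := rfl
    rw [this]
    have hterm : 0 < A j i * v i := mul_pos hAji hiS
    refine lt_of_lt_of_le hterm ?_
    refine Finset.single_le_sum (f := fun k => A j k * v k) (fun k _ => mul_nonneg (hnonneg j k) (hvnn k)) (Finset.mem_univ i)
  rw [hAvv] at hpos
  simp only [Pi.smul_apply, smul_eq_mul, hvj, mul_zero] at hpos
  exact lt_irrefl 0 hpos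

/-- A nonnegative matrix is irreducible if for every nonempty proper subset `S` of indices
there is a nonzero entry from `S` to its complement. -/
def MatrixIrreducible {n : ℕ} (A : Matrix (Fin n) (Fin n) ℝ) : Prop :=
  ∀ S : Set (Fin n), S.Nonempty → S ≠ Set.univ → ∃ i ∈ S, ∃ j ∉ S, A i j ≠ 0

theorem stmt_0 {n : ℕ} (a b : ℕ) (ha : 0 < a) (hb : 0 < b)
    (A : Matrix (Fin n) (Fin n) ℝ)
    (hnonneg : ∀ i j, 0 ≤ A i j) (hsymm : A.IsSymm) (hirr : MatrixIrreducible A)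
    (μ : ℝ) (hμmem : μ ∈ spectrum ℝ A) (hμmax : ∀ x ∈ spectrum ℝ A, x ≤ μ)
    (μ' : ℝ) (hμ' : μ' = ((a : ℝ) + Real.sqrt ((a : ℝ) ^ 2 + 4 * b)) / 2)
    (B : Matrix (Fin n) (Fin n) ℝ)
    (hB : B = A * A - (a : ℝ) • A - (b : ℝ) • (1 : Matrix (Fin n) (Fin n) ℝ))
    (hcol : ∀ j, ∑ i, B i j ≤ 0) :
    μ ≤ μ' ∧ (μ = μ' ↔ ∀ j, ∑ i, B i j = 0) := by
  rcases Nat.eq_zero_or_pos n with hn | hn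
  · subst hn
    exact absurd (isUnit_of_subsingleton _) (spectrum.mem_iff.mp hμmem)
  haveI : Nonempty (Fin n) := ⟨⟨0, hn⟩⟩
  obtain ⟨v, hvpos, hAv⟩ := pos_eigvec A hnonneg hsymm hirr μ hμmem hμmax
    (psd_shift A hsymm μ hμmax)
  set c : ℝ := μ ^ 2 - a * μ - b with hc
  -- B *ᵥ v = c • v
  have h2 : (A * A) *ᵥ v = (μ * μ) • v := by
    rw [← Matrix.mulVec_mulVec, hAv, Matrix.mulVec_smul, hAv, smul_smul]
  have hBv : B *ᵥ v = c • v := by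
    rw [hB, Matrix.sub_mulVec, Matrix.sub_mulVec, h2, Matrix.smul_mulVec, hAv,
      Matrix.smul_mulVec, Matrix.one_mulVec]
    funext i
    simp only [Pi.sub_apply, Pi.smul_apply, smul_eq_mul, hc]
    ring
  set T : ℝ := ∑ i, v i with hT
  have hTpos : 0 < T := Finset.sum_pos (fun i _ => hvpos i) Finset.univ_nonempty
  have hsum : ∑ j, (∑ i, B i j) * v j = c * T := by
    calc ∑ j, (∑ i, B i j) * v j = ∑ j, ∑ i, B i j * v j := by
          exact Finset.sum_congr rfl fun j _ => Finset.sum_mul ..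
      _ = ∑ i, ∑ j, B i j * v j := Finset.sum_comm
      _ = ∑ i, (B *ᵥ v) i := rfl
      _ = ∑ i, c * v i := by rw [hBv]; rfl
      _ = c * T := by rw [hT, Finset.mul_sum]
  -- c ≤ 0
  have hterm_nonpos : ∀ j : Fin n, (∑ i, B i j) * v j ≤ 0 :=
    fun j => mul_nonpos_of_nonpos_of_nonneg (hcol j) (hvpos j).le
  have hcT_nonpos : c * T ≤ 0 := by
    rw [← hsum]; exact Finset.sum_nonpos fun j _ => hterm_nonpos j
  have hc_nonpos : c ≤ 0 := by nlinarith
  -- μ ≥ 0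
  have hvv_pos : 0 < v ⬝ᵥ v :=
    Finset.sum_pos (fun i _ => mul_pos (hvpos i) (hvpos i)) Finset.univ_nonempty
  have hμnonneg : 0 ≤ μ := by
    have h1 : 0 ≤ v ⬝ᵥ (A *ᵥ v) := by
      show 0 ≤ ∑ i, v i * ∑ j, A i j * v j
      exact Finset.sum_nonneg fun i _ => mul_nonneg (hvpos i).le
        (Finset.sum_nonneg fun j _ => mul_nonneg (hnonneg i j) (hvpos j).le)
    have h2 : v ⬝ᵥ (A *ᵥ v) = μ * (v ⬝ᵥ v) := by
      rw [hAv, dotProduct_smul, smul_eq_mul]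
    nlinarith
  -- sqrt facts
  set s : ℝ := Real.sqrt ((a : ℝ) ^ 2 + 4 * b) with hsdef
  have hs2 : s ^ 2 = (a : ℝ) ^ 2 + 4 * b := by
    rw [hsdef]
    exact Real.sq_sqrt (by positivity)
  have hsnn : 0 ≤ s := Real.sqrt_nonneg _
  have hbpos : (0 : ℝ) < b := by exact_mod_cast hb
  have hapos : (0 : ℝ) < a := by exact_mod_cast ha
  have hs_gt : (a : ℝ) < s := by nlinarith
  -- factorization
  have hfact : c = (μ - μ') * (μ - ((a : ℝ) - s) / 2) := by
    rw [hc, hμ']; linear_combination hs2 / 4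
  have hfac2 : 0 < μ - ((a : ℝ) - s) / 2 := by linarith
  constructor
  · nlinarith [hfact, hc_nonpos, hfac2]
  constructor
  · intro heq
    have hc0 : c = 0 := by rw [hfact, heq, sub_self, zero_mul]
    have hsz : ∑ j, (∑ i, B i j) * v j = 0 := by rw [hsum, hc0, zero_mul]
    intro j
    have := (Finset.sum_eq_zero_iff_of_nonpos fun j _ => hterm_nonpos j).mp hsz j
      (Finset.mem_univ j)
    rcases mul_eq_zero.mp this with h | h
    · exact h
    · exact absurd h (hvpos j).ne'
  · intro hz
    have hsz : c * T = 0 := by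
      rw [← hsum]
      exact Finset.sum_eq_zero fun j _ => by rw [hz j, zero_mul]
    have hc0 : c = 0 := by
      rcases mul_eq_zero.mp hsz with h | h
      · exact h
      · exact absurd h hTpos.ne'
    have := hfact ▸ hc0
    rcases mul_eq_zero.mp this with h | h
    · linarith [sub_eq_zero.mp h]
    · linarith
end

section
/- Let k ≥ 1 and n ≥ 5k/2, and let G be a simple graph of order n. If G contains no matching of size k, then e(G) ≤ e(S_{n,k-1}), with equality if and only if G ≅ S_{n,k-1}. -/
open SimpleGraph Finset

/-- `S_{n,k} = K_k ∨ \overline{K_{n-k}}` on vertex set `Fin n`: the first `k` vertices form a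
clique joined to everything else. -/
def Snk (n k : ℕ) : SimpleGraph (Fin n) where
  Adj i j := i ≠ j ∧ ((i : ℕ) < k ∨ (j : ℕ) < k)
  symm := by constructor; intro i j ⟨h1, h2⟩; exact ⟨h1.symm, h2.symm⟩
  loopless := by constructor; intro i ⟨h1, _⟩; exact h1 rfl

/-- `G` has a matching of size `k`. -/
def HasMatchingOfSize {V : Type*} [DecidableEq V] (G : SimpleGraph V) (k : ℕ) : Prop :=
  ∃ M : Finset (Sym2 V), (M : Set (Sym2 V)) ⊆ G.edgeSet ∧ M.card = k ∧
    ∀ e ∈ M, ∀ f ∈ M, e ≠ f → ∀ v : V, ¬(v ∈ e ∧ v ∈ f)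

instance (n k : ℕ) : DecidableRel (Snk n k).Adj := fun _ _ => instDecidableAnd

set_option linter.unusedSectionVars false
set_option linter.unusedVariables false

namespace EG

variable {V : Type*} [DecidableEq V] [Fintype V]

lemma sym2_rep (e : Sym2 V) : ∃ a b, e = s(a, b) :=
  e.inductionOn fun a b => ⟨a, b, rfl⟩

variable (G : SimpleGraph V) [DecidableRel G.Adj]

/-- Matching predicate as in the target statement. -/
def IsM (M : Finset (Sym2 V)) : Prop :=
  (M : Set (Sym2 V)) ⊆ G.edgeSet ∧
    ∀ e ∈ M, ∀ f ∈ M, e ≠ f → ∀ v : V, ¬(v ∈ e ∧ v ∈ f)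

variable {G}

lemma isM_subset {M M' : Finset (Sym2 V)} (hM : IsM G M) (h : M' ⊆ M) : IsM G M' :=
  ⟨fun e he => hM.1 (h he), fun e he f hf hef v hv => hM.2 e (h he) f (h hf) hef v hv⟩

lemma isM_empty : IsM G (∅ : Finset (Sym2 V)) := by
  constructor <;> simp

lemma uniqueEdge {M : Finset (Sym2 V)} (hM : IsM G M) {e f : Sym2 V} {v : V}
    (he : e ∈ M) (hf : f ∈ M) (hve : v ∈ e) (hvf : v ∈ f) : e = f := by
  by_contra hne
  exact hM.2 e he f hf hne v ⟨hve, hvf⟩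

lemma has_iff {k : ℕ} : HasMatchingOfSize G k ↔ ∃ M, IsM G M ∧ M.card = k := by
  constructor
  · rintro ⟨M, h1, h2, h3⟩; exact ⟨M, ⟨h1, h3⟩, h2⟩
  · rintro ⟨M, ⟨h1, h3⟩, h2⟩; exact ⟨M, h1, h2, h3⟩

lemma card_lt_of_not_has {k : ℕ} (hM : ¬ HasMatchingOfSize G k) {M : Finset (Sym2 V)}
    (h : IsM G M) : M.card < k := by
  by_contra hc
  obtain ⟨M', hsub, hcard⟩ := Finset.exists_subset_card_eq (le_of_not_gt hc)
  exact hM (has_iff.2 ⟨M', isM_subset h hsub, hcard⟩)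

/-- covered vertices -/
def cov (M : Finset (Sym2 V)) : Finset V := M.biUnion (fun e => univ.filter (· ∈ e))

lemma mem_cov {M : Finset (Sym2 V)} {v : V} : v ∈ cov M ↔ ∃ e ∈ M, v ∈ e := by
  simp [cov]

lemma cov_mono {M M' : Finset (Sym2 V)} (h : M' ⊆ M) : cov M' ⊆ cov M := by
  intro v hv
  rw [mem_cov] at hv ⊢
  obtain ⟨e, he, hve⟩ := hv
  exact ⟨e, h he, hve⟩

lemma not_isDiag_of_isM {M : Finset (Sym2 V)} (hM : IsM G M) {e : Sym2 V} (he : e ∈ M) :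
    ¬ e.IsDiag :=
  G.not_isDiag_of_mem_edgeSet (hM.1 he)

lemma card_endpoints {e : Sym2 V} (he : ¬ e.IsDiag) : (univ.filter (· ∈ e)).card = 2 := by
  obtain ⟨a, b, rfl⟩ := sym2_rep e
  rw [Sym2.mk_isDiag_iff] at he
  have : univ.filter (· ∈ s(a, b)) = {a, b} := by
    ext x; simp [Sym2.mem_iff]
  rw [this, card_insert_of_notMem (by simpa using he), card_singleton]

lemma card_cov {M : Finset (Sym2 V)} (hM : IsM G M) : (cov M).card = 2 * M.card := by
  rw [cov, card_biUnion]
  · rw [Finset.sum_congr rfl fun e he => card_endpoints (not_isDiag_of_isM hM he)]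
    simp [mul_comm]
  · intro e he f hf hef
    simp only [Finset.disjoint_left, mem_filter]
    rintro v ⟨-, hve⟩ ⟨-, hvf⟩
    exact hM.2 e he f hf hef v ⟨hve, hvf⟩

lemma isM_insert {M : Finset (Sym2 V)} (hM : IsM G M) {x y : V} (hxy : G.Adj x y)
    (hx : x ∉ cov M) (hy : y ∉ cov M) :
    IsM G (insert s(x, y) M) ∧ s(x, y) ∉ M := by
  have hnm : s(x, y) ∉ M := fun h => hx (mem_cov.2 ⟨_, h, by simp⟩)
  refine ⟨⟨?_, ?_⟩, hnm⟩
  · intro e he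
    rcases Finset.mem_insert.1 (by exact_mod_cast he) with h | h
    · subst h; exact hxy
    · exact hM.1 h
  · intro e he f hf hef v hv
    rcases Finset.mem_insert.1 he with he' | he' <;> rcases Finset.mem_insert.1 hf with hf' | hf'
    · exact hef (he'.trans hf'.symm)
    · subst he'
      rcases (Sym2.mem_iff).1 hv.1 with rfl | rfl
      · exact hx (mem_cov.2 ⟨f, hf', hv.2⟩)
      · exact hy (mem_cov.2 ⟨f, hf', hv.2⟩)
    · subst hf'
      rcases (Sym2.mem_iff).1 hv.2 with rfl | rfl
      · exact hx (mem_cov.2 ⟨e, he', hv.1⟩)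
      · exact hy (mem_cov.2 ⟨e, he', hv.1⟩)
    · exact hM.2 e he' f hf' hef v hv

lemma not_mem_cov_erase {M : Finset (Sym2 V)} (hM : IsM G M) {e : Sym2 V} {v : V}
    (he : e ∈ M) (hv : v ∈ e) : v ∉ cov (M.erase e) := by
  rw [mem_cov]
  rintro ⟨f, hf, hvf⟩
  have := uniqueEdge hM (Finset.mem_of_mem_erase hf) he hvf hv
  exact (Finset.ne_of_mem_erase hf) this

lemma exists_max_matching : ∃ M, IsM G M ∧ ∀ M', IsM G M' → M'.card ≤ M.card := by
  classical
  have hsub : ∀ M, IsM G M → M ∈ G.edgeFinset.powerset.filter (fun M => IsM G M) := by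
    intro M hM
    rw [Finset.mem_filter, Finset.mem_powerset]
    exact ⟨fun e he => mem_edgeFinset.2 (hM.1 he), hM⟩
  obtain ⟨M, hMmem, hmax⟩ := Finset.exists_max_image
    (G.edgeFinset.powerset.filter (fun M => IsM G M)) Finset.card ⟨∅, hsub ∅ isM_empty⟩
  exact ⟨M, (Finset.mem_filter.1 hMmem).2, fun M' hM' => hmax M' (hsub M' hM')⟩


section Partner

/-- the matched partner of a covered vertex -/
noncomputable def ptn (M : Finset (Sym2 V)) (v : V) : V :=
  if h : ∃ e ∈ M, v ∈ e then Sym2.Mem.other' h.choose_spec.2 else v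

variable {M : Finset (Sym2 V)} (hM : IsM G M)
include hM

lemma ptn_spec {v : V} (hv : v ∈ cov M) : s(v, ptn M v) ∈ M := by
  rw [mem_cov] at hv
  rw [ptn, dif_pos hv, Sym2.other_spec' hv.choose_spec.2]
  exact hv.choose_spec.1

lemma adj_ptn {v : V} (hv : v ∈ cov M) : G.Adj v (ptn M v) :=
  (G.mem_edgeSet).1 (hM.1 (ptn_spec hM hv))

lemma ptn_ne {v : V} (hv : v ∈ cov M) : ptn M v ≠ v :=
  (adj_ptn hM hv).ne'

lemma ptn_mem_cov {v : V} (hv : v ∈ cov M) : ptn M v ∈ cov M :=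
  mem_cov.2 ⟨s(v, ptn M v), ptn_spec hM hv, by simp⟩

lemma eq_sym2_ptn {e : Sym2 V} {v : V} (he : e ∈ M) (hv : v ∈ e) :
    e = s(v, ptn M v) :=
  uniqueEdge hM he (ptn_spec hM (mem_cov.2 ⟨e, he, hv⟩)) hv (by simp)

lemma ptn_ptn {v : V} (hv : v ∈ cov M) : ptn M (ptn M v) = v := by
  have h1 := ptn_spec hM hv
  have h2 := eq_sym2_ptn hM h1 (Sym2.mem_mk_right _ _)
  rw [Sym2.eq_iff] at h2
  rcases h2 with ⟨h, -⟩ | ⟨h, -⟩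
  · exact absurd h (ptn_ne hM hv).symm
  · exact h.symm

lemma ptn_injOn : Set.InjOn (ptn M) (cov M) := by
  intro a ha b hb h
  have := congrArg (ptn M) h
  rwa [ptn_ptn hM ha, ptn_ptn hM hb] at this

end Partner

lemma not_mem_cov_insert {M : Finset (Sym2 V)} {x y v : V} (h1 : v ∉ cov M)
    (hx : v ≠ x) (hy : v ≠ y) : v ∉ cov (insert s(x, y) M) := by
  rw [mem_cov]
  rintro ⟨e, he, hve⟩
  rcases Finset.mem_insert.1 he with rfl | he'
  · rcases Sym2.mem_iff.1 hve with rfl | rfl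
    · exact hx rfl
    · exact hy rfl
  · exact h1 (mem_cov.2 ⟨e, he', hve⟩)

section Exchange

variable {M : Finset (Sym2 V)} (hM : IsM G M)
  (hmax : ∀ M', IsM G M' → M'.card ≤ M.card)

/-- number of uncovered neighbours -/
def dI (G : SimpleGraph V) [DecidableRel G.Adj] (M : Finset (Sym2 V)) (v : V) : ℕ :=
  (G.neighborFinset v ∩ (univ \ cov M)).card

lemma mem_dIset {M : Finset (Sym2 V)} {v u : V} :
    u ∈ G.neighborFinset v ∩ (univ \ cov M) ↔ G.Adj v u ∧ u ∉ cov M := by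
  simp [SimpleGraph.mem_neighborFinset]

include hM hmax

lemma no_edge_I {u w : V} (hu : u ∉ cov M) (hw : w ∉ cov M) : ¬ G.Adj u w := by
  intro hadj
  obtain ⟨h1, h2⟩ := isM_insert hM hadj hu hw
  have := hmax _ h1
  rw [Finset.card_insert_of_notMem h2] at this
  omega

lemma F1 {a : V} (ha : a ∈ cov M) (h2 : 2 ≤ dI G M a) : dI G M (ptn M a) = 0 := by
  by_contra h1
  set b := ptn M a with hb
  obtain ⟨w, hw⟩ := Finset.card_pos.1 (Nat.pos_of_ne_zero h1)
  obtain ⟨hwadj, hwI⟩ := mem_dIset.1 hw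
  obtain ⟨u, hu, huw⟩ := Finset.exists_mem_ne (by omega : 1 < dI G M a) w
  obtain ⟨huadj, huI⟩ := mem_dIset.1 hu
  have hab : s(a, b) ∈ M := ptn_spec hM ha
  have haM1 : a ∉ cov (M.erase s(a, b)) := not_mem_cov_erase hM hab (by simp)
  have hbM1 : b ∉ cov (M.erase s(a, b)) := not_mem_cov_erase hM hab (by simp)
  have hwM1 : w ∉ cov (M.erase s(a, b)) := fun h => hwI (cov_mono (Finset.erase_subset _ _) h)
  have hM1 : IsM G (M.erase s(a, b)) := isM_subset hM (Finset.erase_subset _ _)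
  obtain ⟨hM2, hn2⟩ := isM_insert hM1 hwadj.symm hwM1 hbM1
  have haM2 : a ∉ cov (insert s(w, b) (M.erase s(a, b))) :=
    not_mem_cov_insert haM1 (fun h => hwI (h ▸ ha)) (ptn_ne hM ha).symm
  have huM2 : u ∉ cov (insert s(w, b) (M.erase s(a, b))) :=
    not_mem_cov_insert (fun h => huI (cov_mono (Finset.erase_subset _ _) h)) huw
      (fun h => huI (h ▸ ptn_mem_cov hM ha))
  obtain ⟨hM3, hn3⟩ := isM_insert hM2 (by exact huadj.symm) huM2 haM2
  have hc := hmax _ hM3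
  rw [Finset.card_insert_of_notMem hn3, Finset.card_insert_of_notMem hn2,
    Finset.card_erase_of_mem hab] at hc
  have : 1 ≤ M.card := Finset.card_pos.2 ⟨_, hab⟩
  omega

lemma F2 {p c : V} (hp : p ∈ cov M) (hh : 2 ≤ dI G M (ptn M p)) (hc : c ∈ cov M)
    (hcp : c ≠ p) (hch : c ≠ ptn M p) (hd : 1 ≤ dI G M (ptn M c)) (hadj : G.Adj p c) :
    False := by
  set h := ptn M p with hhdef
  set d := ptn M c with hddef
  have hph : s(p, h) ∈ M := ptn_spec hM hp
  have hcd : s(c, d) ∈ M := ptn_spec hM hc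
  have hpc : p ≠ c := hadj.ne
  have hpd : p ≠ d := by
    intro heq
    apply hch
    rw [hhdef, hddef] at *
    rw [heq, ptn_ptn hM hc]
  have hhd : h ≠ d := by
    intro heq
    have := congrArg (ptn M) heq
    rw [hhdef, hddef, ptn_ptn hM hp, ptn_ptn hM hc] at this
    exact hcp this.symm
  have hhc : h ≠ c := fun hx => hch hx.symm
  have hne : s(p, h) ≠ s(c, d) := by
    intro hx
    rw [Sym2.eq_iff] at hx
    rcases hx with ⟨h1, h2⟩ | ⟨h1, h2⟩
    · exact hpc h1
    · exact hpd h1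
  obtain ⟨w, hw⟩ := Finset.card_pos.1 hd
  obtain ⟨hwadj, hwI⟩ := mem_dIset.1 hw
  obtain ⟨u, hu, huw⟩ := Finset.exists_mem_ne (by omega : 1 < dI G M h) w
  obtain ⟨huadj, huI⟩ := mem_dIset.1 hu
  -- M1 : doubly erased
  have hcd' : s(c, d) ∈ M.erase s(p, h) := Finset.mem_erase.2 ⟨fun hx => hne hx.symm, hcd⟩
  set M1 := (M.erase s(p, h)).erase s(c, d) with hM1def
  have hM1 : IsM G M1 := isM_subset hM ((Finset.erase_subset _ _).trans (Finset.erase_subset _ _))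
  have hsub1 : M1 ⊆ M := (Finset.erase_subset _ _).trans (Finset.erase_subset _ _)
  have hMe : IsM G (M.erase s(p, h)) := isM_subset hM (Finset.erase_subset _ _)
  have hpM1 : p ∉ cov M1 := fun hx =>
    not_mem_cov_erase hM hph (by simp) (cov_mono (Finset.erase_subset _ _) hx)
  have hhM1 : h ∉ cov M1 := fun hx =>
    not_mem_cov_erase hM hph (by simp) (cov_mono (Finset.erase_subset _ _) hx)
  have hcM1 : c ∉ cov M1 := not_mem_cov_erase hMe hcd' (by simp)
  have hdM1 : d ∉ cov M1 := not_mem_cov_erase hMe hcd' (by simp)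
  have hdcov : d ∈ cov M := ptn_mem_cov hM hc
  have hhcov : h ∈ cov M := ptn_mem_cov hM hp
  -- M2 := insert s(d,w)
  obtain ⟨hM2, hn2⟩ := isM_insert hM1 hwadj.symm
    (fun hx => hwI (cov_mono hsub1 hx)) hdM1
  -- M3 := insert s(p,c)
  obtain ⟨hM3, hn3⟩ := isM_insert hM2 hadj
    (not_mem_cov_insert hpM1 (fun hx => hwI (hx ▸ hp)) hpd)
    (not_mem_cov_insert hcM1 (fun hx => hwI (hx ▸ hc)) (ptn_ne hM hc).symm)
  -- M4 := insert s(u,h)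
  obtain ⟨hM4, hn4⟩ := isM_insert hM3 (by exact huadj.symm)
    (not_mem_cov_insert (not_mem_cov_insert (fun hx => huI (cov_mono hsub1 hx))
        huw (fun hx => huI (by rw [hx]; exact hdcov)))
      (fun hx => huI (by rw [hx]; exact hp)) (fun hx => huI (by rw [hx]; exact hc)))
    (not_mem_cov_insert (not_mem_cov_insert hhM1
        (fun hx => hwI (by rw [← hx]; exact hhcov)) hhd)
      (ptn_ne hM hp) hhc)
  have hcount := hmax _ hM4
  rw [Finset.card_insert_of_notMem hn4, Finset.card_insert_of_notMem hn3,
    Finset.card_insert_of_notMem hn2, hM1def, Finset.card_erase_of_mem hcd',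
    Finset.card_erase_of_mem hph] at hcount
  have : 2 ≤ M.card := Finset.one_lt_card.2 ⟨_, hph, _, hcd, hne⟩
  omega

end Exchange

lemma two_mul_choose_two (L : ℕ) : 2 * L.choose 2 = L * (L - 1) := by
  induction L with
  | zero => rfl
  | succ n ih =>
    rw [Nat.choose_succ_succ, Nat.choose_one_right, Nat.mul_add, ih]
    cases n <;> simp <;> ring

/-- The bounded-degree case: if all degrees are at most `2k-2` and there is no
`k`-matching, then `e(G) ≤ (k-1)(2k-1)`. -/
lemma ledger {k : ℕ} (hk : 2 ≤ k) (hdeg : ∀ v, G.degree v ≤ 2 * k - 2)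
    (hno : ¬ HasMatchingOfSize G k) :
    G.edgeFinset.card ≤ (k - 1) * (2 * k - 1) := by
  classical
  obtain ⟨M, hM, hmax⟩ := exists_max_matching (G := G)
  have hm : M.card ≤ k - 1 := by have := card_lt_of_not_has hno hM; omega
  set C := cov M with hC
  set Heav := C.filter (fun v => 2 ≤ dI G M v) with hHeav
  set P := Heav.image (ptn M) with hP
  set LV := C \ (Heav ∪ P) with hLV
  set Sset := LV.filter (fun v => 1 ≤ dI G M v) with hSset
  set Free := LV.filter (fun v => dI G M (ptn M v) = 0) with hFree
  have hHC : Heav ⊆ C := Finset.filter_subset _ _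
  have hPC : P ⊆ C := by
    intro p hp
    obtain ⟨a, ha, rfl⟩ := Finset.mem_image.1 hp
    exact ptn_mem_cov hM (hHC ha)
  have hLVC : LV ⊆ C := Finset.sdiff_subset
  have hPzero : ∀ p ∈ P, dI G M p = 0 := by
    intro p hp
    obtain ⟨a, ha, rfl⟩ := Finset.mem_image.1 hp
    obtain ⟨haC, ha2⟩ := Finset.mem_filter.1 ha
    exact F1 hM hmax haC ha2
  have hHP : Disjoint Heav P := by
    rw [Finset.disjoint_left]
    intro a haH haP
    have h1 := (Finset.mem_filter.1 haH).2
    have h2 := hPzero a haP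
    omega
  have hcardP : P.card = Heav.card :=
    Finset.card_image_of_injOn (fun a ha b hb hab => ptn_injOn hM (hHC ha) (hHC hb) hab)
  have hcardC : C.card = 2 * M.card := card_cov hM
  have hcardLV : LV.card + 2 * Heav.card = 2 * M.card := by
    have h1 : (Heav ∪ P).card = Heav.card + Heav.card := by
      rw [Finset.card_union_of_disjoint hHP, hcardP]
    have h2 : LV.card = C.card - (Heav ∪ P).card := by
      rw [hLV, Finset.card_sdiff_of_subset (Finset.union_subset hHC hPC)]
    have h3 : (Heav ∪ P).card ≤ C.card := Finset.card_le_card (Finset.union_subset hHC hPC)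
    omega
  -- ptn maps LV into LV
  have hptnLV : ∀ v ∈ LV, ptn M v ∈ LV := by
    intro v hv
    obtain ⟨hvC, hvn⟩ := Finset.mem_sdiff.1 hv
    rw [Finset.mem_union, not_or] at hvn
    rw [hLV, Finset.mem_sdiff, Finset.mem_union, not_or]
    refine ⟨ptn_mem_cov hM hvC, ?_, ?_⟩
    · intro hx
      exact hvn.2 (Finset.mem_image.2 ⟨ptn M v, hx, ptn_ptn hM hvC⟩)
    · intro hx
      obtain ⟨a, ha, hav⟩ := Finset.mem_image.1 hx
      have hva : a = v := by
        have := congrArg (ptn M) hav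
        rwa [ptn_ptn hM hvC, ptn_ptn hM (hHC ha)] at this
      exact hvn.1 (hva ▸ ha)
  have hLVone : ∀ v ∈ LV, dI G M v ≤ 1 := by
    intro v hv
    obtain ⟨hvC, hvn⟩ := Finset.mem_sdiff.1 hv
    rw [Finset.mem_union, not_or] at hvn
    have := hvn.1
    rw [hHeav, Finset.mem_filter, not_and] at this
    have := this hvC
    omega
  have hcardFree : Free.card + Sset.card = LV.card := by
    have h1 : Free.card + (LV.filter (fun v => ¬ dI G M (ptn M v) = 0)).card = LV.card :=
      Finset.card_filter_add_card_filter_not _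
    have h2 : (LV.filter (fun v => ¬ dI G M (ptn M v) = 0)).card = Sset.card := by
      apply Finset.card_bij (fun v _ => ptn M v)
      · intro v hv
        obtain ⟨hvLV, hvd⟩ := Finset.mem_filter.1 hv
        exact Finset.mem_filter.2 ⟨hptnLV v hvLV, by omega⟩
      · intro a ha b hb hab
        obtain ⟨haLV, -⟩ := Finset.mem_filter.1 ha
        obtain ⟨hbLV, -⟩ := Finset.mem_filter.1 hb
        exact ptn_injOn hM (hLVC haLV) (hLVC hbLV) hab
      · intro w hw
        obtain ⟨hwLV, hwd⟩ := Finset.mem_filter.1 hw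
        refine ⟨ptn M w, Finset.mem_filter.2 ⟨hptnLV w hwLV, ?_⟩, ptn_ptn hM (hLVC hwLV)⟩
        rw [ptn_ptn hM (hLVC hwLV)]
        omega
    omega
  -- edge classes
  set E1 := G.edgeFinset.filter (fun e => ∃ w ∈ e, w ∉ C) with hE1
  set E2 := G.edgeFinset.filter (fun e => (∀ w ∈ e, w ∈ C) ∧ ∃ w ∈ e, w ∈ Heav) with hE2
  set E3 := G.edgeFinset.filter
    (fun e => (∀ w ∈ e, w ∈ C ∧ w ∉ Heav) ∧ ∃ w ∈ e, w ∈ P) with hE3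
  set E4 := G.edgeFinset.filter (fun e => ∀ w ∈ e, w ∈ LV) with hE4
  have hcover : G.edgeFinset.card ≤ E1.card + E2.card + E3.card + E4.card := by
    have hsub : G.edgeFinset ⊆ E1 ∪ E2 ∪ E3 ∪ E4 := by
      intro e he
      by_cases h1 : ∃ w ∈ e, w ∉ C
      · exact Finset.mem_union_left _ (Finset.mem_union_left _ (Finset.mem_union_left _
          (Finset.mem_filter.2 ⟨he, h1⟩)))
      · push_neg at h1
        by_cases h2 : ∃ w ∈ e, w ∈ Heav
        · exact Finset.mem_union_left _ (Finset.mem_union_left _ (Finset.mem_union_right _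
            (Finset.mem_filter.2 ⟨he, h1, h2⟩)))
        · push_neg at h2
          by_cases h3 : ∃ w ∈ e, w ∈ P
          · exact Finset.mem_union_left _ (Finset.mem_union_right _
              (Finset.mem_filter.2 ⟨he, fun w hw => ⟨h1 w hw, h2 w hw⟩, h3⟩))
          · push_neg at h3
            refine Finset.mem_union_right _ (Finset.mem_filter.2 ⟨he, fun w hw => ?_⟩)
            rw [hLV, Finset.mem_sdiff, Finset.mem_union]
            exact ⟨h1 w hw, by push_neg; exact ⟨h2 w hw, h3 w hw⟩⟩
    calc G.edgeFinset.card ≤ (E1 ∪ E2 ∪ E3 ∪ E4).card := Finset.card_le_card hsub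
      _ ≤ (E1 ∪ E2 ∪ E3).card + E4.card := Finset.card_union_le _ _
      _ ≤ (E1 ∪ E2).card + E3.card + E4.card := by
          have := Finset.card_union_le (E1 ∪ E2) E3; omega
      _ ≤ E1.card + E2.card + E3.card + E4.card := by
          have := Finset.card_union_le E1 E2; omega
  have hrep : ∀ e ∈ G.edgeFinset, ∃ a b : V, G.Adj a b ∧ e = s(a, b) := by
    intro e he
    obtain ⟨a, b, rfl⟩ := sym2_rep e
    exact ⟨a, b, mem_edgeFinset.1 he, rfl⟩
  have hdIeq : ∀ v : V, dI G M v + (G.neighborFinset v ∩ C).card = G.degree v := by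
    intro v
    have h1 : G.neighborFinset v ∩ (univ \ C) = G.neighborFinset v \ C := by
      ext u; simp
    have h2 : dI G M v = (G.neighborFinset v \ C).card := congrArg Finset.card h1
    rw [h2]
    have h3 : (G.neighborFinset v ∩ C).card + (G.neighborFinset v \ C).card
        = (G.neighborFinset v).card := Finset.card_inter_add_card_sdiff _ _
    have h4 : G.degree v = (G.neighborFinset v).card := rfl
    omega
  set T := ∑ v ∈ Heav, dI G M v with hT
  -- E1 bound
  have hb1 : E1.card ≤ T + Sset.card := by
    have hsub : E1 ⊆ C.biUnion
        (fun v => (G.neighborFinset v ∩ (univ \ C)).image (fun u => s(v, u))) := by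
      intro e he
      obtain ⟨he0, w, hwe, hwC⟩ := Finset.mem_filter.1 he
      obtain ⟨a, b, hab, rfl⟩ := hrep e he0
      rcases Sym2.mem_iff.1 hwe with rfl | rfl
      · have hbC : b ∈ C := by
          by_contra hbC
          exact no_edge_I hM hmax hwC hbC hab
        exact Finset.mem_biUnion.2 ⟨b, hbC, Finset.mem_image.2
          ⟨w, mem_dIset.2 ⟨hab.symm, hwC⟩, Sym2.eq_swap⟩⟩
      · have haC : a ∈ C := by
          by_contra haC
          exact no_edge_I hM hmax haC hwC hab
        exact Finset.mem_biUnion.2 ⟨a, haC, Finset.mem_image.2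
          ⟨w, mem_dIset.2 ⟨hab, hwC⟩, rfl⟩⟩
    have hCeq : C = (Heav ∪ P) ∪ LV := by
      ext v
      constructor
      · intro hv
        by_cases h1 : v ∈ Heav ∪ P
        · exact Finset.mem_union_left _ h1
        · exact Finset.mem_union_right _ (Finset.mem_sdiff.2 ⟨hv, h1⟩)
      · intro hv
        rcases Finset.mem_union.1 hv with h | h
        · rcases Finset.mem_union.1 h with h' | h'
          · exact hHC h'
          · exact hPC h'
        · exact hLVC h
    have hsum1 : ∑ v ∈ C, dI G M v = T + Sset.card := by
      rw [hCeq, Finset.sum_union (by rw [hLV]; exact Finset.disjoint_sdiff),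
        Finset.sum_union hHP]
      have hPz : ∑ v ∈ P, dI G M v = 0 := Finset.sum_eq_zero hPzero
      have hLz : ∑ v ∈ LV, dI G M v = Sset.card := by
        rw [← Finset.sum_filter_add_sum_filter_not LV (fun v => 1 ≤ dI G M v) (dI G M)]
        have h0 : ∑ v ∈ LV.filter (fun v => ¬ 1 ≤ dI G M v), dI G M v = 0 :=
          Finset.sum_eq_zero (fun v hv => by
            have := (Finset.mem_filter.1 hv).2; omega)
        have h1 : ∑ v ∈ Sset, dI G M v = Sset.card := by
          rw [Finset.card_eq_sum_ones]
          exact Finset.sum_congr rfl (fun v hv => by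
            have h2 := (Finset.mem_filter.1 hv).2
            have h3 := hLVone v (Finset.mem_filter.1 hv).1
            omega)
        rw [h0, ← hSset, h1]
        omega
      omega
    calc E1.card ≤ _ := Finset.card_le_card hsub
      _ ≤ ∑ v ∈ C, ((G.neighborFinset v ∩ (univ \ C)).image (fun u => s(v, u))).card :=
          Finset.card_biUnion_le
      _ ≤ ∑ v ∈ C, dI G M v := Finset.sum_le_sum (fun v _ => Finset.card_image_le)
      _ = T + Sset.card := hsum1
  -- E2 bound
  have hb2 : T + E2.card ≤ Heav.card * (2 * k - 2) := by
    have hsub : E2 ⊆ Heav.biUnion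
        (fun v => (G.neighborFinset v ∩ C).image (fun u => s(v, u))) := by
      intro e he
      obtain ⟨he0, hall, w, hwe, hwH⟩ := Finset.mem_filter.1 he
      obtain ⟨a, b, hab, rfl⟩ := hrep e he0
      rcases Sym2.mem_iff.1 hwe with rfl | rfl
      · exact Finset.mem_biUnion.2 ⟨w, hwH, Finset.mem_image.2
          ⟨b, Finset.mem_inter.2 ⟨by simpa using hab, hall b (Sym2.mem_mk_right _ _)⟩, rfl⟩⟩
      · exact Finset.mem_biUnion.2 ⟨w, hwH, Finset.mem_image.2
          ⟨a, Finset.mem_inter.2 ⟨by simpa using hab.symm, hall a (Sym2.mem_mk_left _ _)⟩,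
            Sym2.eq_swap⟩⟩
    have h1 : E2.card ≤ ∑ v ∈ Heav, (G.neighborFinset v ∩ C).card :=
      le_trans (Finset.card_le_card hsub)
        (le_trans Finset.card_biUnion_le (Finset.sum_le_sum (fun v _ => Finset.card_image_le)))
    have h2 : T + ∑ v ∈ Heav, (G.neighborFinset v ∩ C).card ≤ Heav.card * (2 * k - 2) := by
      rw [hT, ← Finset.sum_add_distrib]
      calc ∑ v ∈ Heav, (dI G M v + (G.neighborFinset v ∩ C).card)
          = ∑ v ∈ Heav, G.degree v := Finset.sum_congr rfl (fun v _ => hdIeq v)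
        _ ≤ Heav.card * (2 * k - 2) := by
            have := Finset.sum_le_card_nsmul Heav (fun v => G.degree v) (2 * k - 2)
              (fun v _ => hdeg v)
            simpa using this
    omega
  -- E3 bound
  have hb3 : E3.card ≤ Heav.card * Free.card := by
    have hkey : ∀ p ∈ P, ∀ x, G.Adj p x → x ∈ C → x ∉ Heav → x ∈ Free := by
      intro p hp x hadj hxC hxH
      obtain ⟨a0, ha0, rfl⟩ := Finset.mem_image.1 hp
      have ha0C : a0 ∈ C := hHC ha0
      have hpc : ptn M (ptn M a0) = a0 := ptn_ptn hM ha0C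
      have hhh : 2 ≤ dI G M (ptn M (ptn M a0)) := by
        rw [hpc]; exact (Finset.mem_filter.1 ha0).2
      have hxp : x ≠ ptn M a0 := hadj.ne'
      have hxa0 : x ≠ a0 := fun hx => hxH (hx ▸ ha0)
      have hxP : x ∉ P := by
        intro hxP'
        obtain ⟨b0, hb0, hbx⟩ := Finset.mem_image.1 hxP'
        have hb0C : b0 ∈ C := hHC hb0
        refine F2 hM hmax (ptn_mem_cov hM ha0C) hhh hxC hxp (by rw [hpc]; exact hxa0) ?_ hadj
        rw [← hbx, ptn_ptn hM hb0C]
        have := (Finset.mem_filter.1 hb0).2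
        omega
      have hxLV : x ∈ LV := by
        rw [hLV, Finset.mem_sdiff, Finset.mem_union]
        exact ⟨hxC, by push_neg; exact ⟨hxH, hxP⟩⟩
      rw [hFree, Finset.mem_filter]
      refine ⟨hxLV, ?_⟩
      by_contra hdx
      exact F2 hM hmax (ptn_mem_cov hM ha0C) hhh hxC hxp (by rw [hpc]; exact hxa0)
        (by omega) hadj
    have hsub : E3 ⊆ P.biUnion (fun p => Free.image (fun u => s(p, u))) := by
      intro e he
      obtain ⟨he0, hall, w, hwe, hwP⟩ := Finset.mem_filter.1 he
      obtain ⟨a, b, hab, rfl⟩ := hrep e he0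
      rcases Sym2.mem_iff.1 hwe with rfl | rfl
      · refine Finset.mem_biUnion.2 ⟨w, hwP, Finset.mem_image.2 ⟨b, ?_, rfl⟩⟩
        obtain ⟨hbC, hbH⟩ := hall b (Sym2.mem_mk_right _ _)
        exact hkey w hwP b hab hbC hbH
      · refine Finset.mem_biUnion.2 ⟨w, hwP, Finset.mem_image.2 ⟨a, ?_, Sym2.eq_swap⟩⟩
        obtain ⟨haC, haH⟩ := hall a (Sym2.mem_mk_left _ _)
        exact hkey w hwP a hab.symm haC haH
    calc E3.card ≤ _ := Finset.card_le_card hsub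
      _ ≤ ∑ p ∈ P, (Free.image (fun u => s(p, u))).card := Finset.card_biUnion_le
      _ ≤ ∑ _p ∈ P, Free.card := Finset.sum_le_sum (fun p _ => Finset.card_image_le)
      _ = Heav.card * Free.card := by rw [Finset.sum_const, smul_eq_mul, hcardP]
  -- E4 bound
  have hb4 : E4.card ≤ (LV.card).choose 2 := by
    have h1 : ∀ e ∈ E4, univ.filter (· ∈ e) ∈ LV.powersetCard 2 := by
      intro e he
      obtain ⟨he0, hall⟩ := Finset.mem_filter.1 he
      rw [Finset.mem_powersetCard]
      constructor
      · intro x hx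
        exact hall x (Finset.mem_filter.1 hx).2
      · exact card_endpoints (G.not_isDiag_of_mem_edgeFinset he0)
    have h2 : Set.InjOn (fun e => univ.filter (· ∈ e)) (E4 : Set (Sym2 V)) := by
      intro e he f hf hef
      have hef' : univ.filter (· ∈ e) = univ.filter (· ∈ f) := hef
      apply Sym2.ext
      intro x
      constructor
      · intro hx
        have hx2 : x ∈ univ.filter (· ∈ e) := Finset.mem_filter.2 ⟨Finset.mem_univ x, hx⟩
        rw [hef'] at hx2
        exact (Finset.mem_filter.1 hx2).2
      · intro hx
        have hx2 : x ∈ univ.filter (· ∈ f) := Finset.mem_filter.2 ⟨Finset.mem_univ x, hx⟩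
        rw [← hef'] at hx2
        exact (Finset.mem_filter.1 hx2).2
    calc E4.card ≤ (LV.powersetCard 2).card := Finset.card_le_card_of_injOn _ h1 h2
      _ = (LV.card).choose 2 := Finset.card_powersetCard _ _
  -- final arithmetic
  set ec := G.edgeFinset.card
  set hh := Heav.card
  set L := LV.card
  set S := Sset.card
  set F := Free.card
  set m := M.card
  have h2E4 : 2 * E4.card ≤ L * (L - 1) := by
    rw [← two_mul_choose_two L]; omega
  have hLle : L + 2 * hh ≤ 2 * (k - 1) := by omega
  have goal2 : 2 * ec ≤ 2 * ((k - 1) * (2 * k - 1)) := by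
    have hmain : 2 * ec ≤ 2 * T + 2 * S + 2 * E2.card + 2 * (hh * F) + L * (L - 1) := by
      omega
    rcases Nat.eq_zero_or_pos hh with h0 | h1
    · -- no heavy edges
      have hT0 : T + E2.card = 0 := by
        have := hb2; rw [h0] at this; omega
      have hL1 : 2 * ec ≤ 2 * L + L * (L - 1) := by
        rw [h0] at hmain; omega
      have hL2 : 2 * L + L * (L - 1) ≤ L * (L + 1) := by
        rcases Nat.eq_zero_or_pos L with hL | hL
        · simp [hL]
        · have h3 : L - 1 + 2 = L + 1 := by omega
          have h4 : L * (L - 1 + 2) = L * (L - 1) + 2 * L := by ring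
          have h5 : L * (L + 1) = L * (L - 1) + 2 * L := by rw [← h3, h4]
          omega
      have hL3 : L * (L + 1) ≤ 2 * (k - 1) * (2 * (k - 1) + 1) :=
        Nat.mul_le_mul (by omega) (by omega)
      have : 2 * (k - 1) * (2 * (k - 1) + 1) = 2 * ((k - 1) * (2 * k - 1)) := by
        have h2 : 2 * (k - 1) + 1 = 2 * k - 1 := by omega
        rw [h2]; ring
      omega
    · -- at least one heavy edge
      have hSF : 2 * S + 2 * (hh * F) ≤ 2 * (hh * L) := by
        have hs1 : S ≤ hh * S := Nat.le_mul_of_pos_left S h1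
        have hs2 : hh * S + hh * F = hh * L := by
          rw [← Nat.left_distrib]
          congr 1
          omega
        omega
      have hstep1 : 2 * ec ≤ 4 * (hh * (k - 1)) + 2 * (hh * L) + L * L := by
        have hTE : 2 * T + 2 * E2.card ≤ 2 * (hh * (2 * k - 2)) := by omega
        have hkk : hh * (2 * k - 2) = 2 * (hh * (k - 1)) := by
          have : 2 * k - 2 = 2 * (k - 1) := by omega
          rw [this]; ring
        have hLL : L * (L - 1) ≤ L * L := Nat.mul_le_mul_left _ (by omega)
        omega
      have hstep2 : L * L + 2 * (hh * L) ≤ 2 * ((k - 1) * L) := by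
        have : L * L + 2 * (hh * L) = (L + 2 * hh) * L := by ring
        rw [this]
        calc (L + 2 * hh) * L ≤ (2 * (k - 1)) * L := Nat.mul_le_mul_right _ hLle
          _ = 2 * ((k - 1) * L) := by ring
      have hstep3 : 4 * (hh * (k - 1)) + 2 * ((k - 1) * L) ≤ 2 * ((k - 1) * (2 * k - 1)) := by
        have e1 : 4 * (hh * (k - 1)) + 2 * ((k - 1) * L) = 2 * ((k - 1) * (2 * hh + L)) := by
          ring
        rw [e1]
        have e2 : (k - 1) * (2 * hh + L) ≤ (k - 1) * (2 * (k - 1)) :=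
          Nat.mul_le_mul_left _ (by omega)
        have e3 : (k - 1) * (2 * (k - 1)) ≤ (k - 1) * (2 * k - 1) :=
          Nat.mul_le_mul_left _ (by omega)
        omega
      omega
  omega

lemma isM_singleton {x y : V} (h : G.Adj x y) : IsM G {s(x, y)} := by
  constructor
  · intro e he
    simp only [Finset.coe_singleton, Set.mem_singleton_iff] at he
    subst he
    exact h
  · intro e he f hf hef v hv
    simp only [Finset.mem_singleton] at he hf
    exact hef (he.trans hf.symm)

end EG

namespace EG

lemma Snk_adj {n k : ℕ} {i j : Fin n} :
    (Snk n k).Adj i j ↔ i ≠ j ∧ ((i : ℕ) < k ∨ (j : ℕ) < k) := Iff.rfl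

section Delete

variable {N : ℕ} (G : SimpleGraph (Fin (N + 1))) [DecidableRel G.Adj] (v : Fin (N + 1))

/-- delete the vertex `v`, transporting to `Fin N` via `succAbove`. -/
def delV : SimpleGraph (Fin N) where
  Adj a b := G.Adj (v.succAbove a) (v.succAbove b)
  symm := ⟨fun a b h => h.symm⟩
  loopless := ⟨fun a h => G.loopless.irrefl _ h⟩

instance : DecidableRel (delV G v).Adj :=
  fun a b => inferInstanceAs (Decidable (G.Adj _ _))

lemma delV_adj {a b : Fin N} :
    (delV G v).Adj a b ↔ G.Adj (v.succAbove a) (v.succAbove b) := Iff.rfl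

lemma card_edge_delV :
    G.edgeFinset.card = (delV G v).edgeFinset.card + G.degree v := by
  classical
  have himg : G.edgeFinset =
      ((delV G v).edgeFinset.image (Sym2.map (v.succAbove))) ∪ G.incidenceFinset v := by
    ext e
    constructor
    · intro he
      by_cases hv : v ∈ e
      · exact Finset.mem_union_right _ (by
          rw [mem_incidenceFinset]
          exact ⟨mem_edgeFinset.1 he, hv⟩)
      · obtain ⟨a, b, rfl⟩ := sym2_rep e
        have hab : G.Adj a b := mem_edgeFinset.1 he
        rw [Sym2.mem_iff] at hv
        push_neg at hv
        obtain ⟨a', ha'⟩ := Fin.exists_succAbove_eq (Ne.symm hv.1)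
        obtain ⟨b', hb'⟩ := Fin.exists_succAbove_eq (Ne.symm hv.2)
        apply Finset.mem_union_left
        refine Finset.mem_image.2 ⟨s(a', b'), ?_, ?_⟩
        · rw [mem_edgeFinset]
          rw [SimpleGraph.mem_edgeSet, delV_adj, ha', hb']
          exact hab
        · rw [Sym2.map_pair_eq, ha', hb']
    · intro he
      rcases Finset.mem_union.1 he with h | h
      · obtain ⟨e', he', rfl⟩ := Finset.mem_image.1 h
        obtain ⟨a', b', rfl⟩ := sym2_rep e'
        rw [mem_edgeFinset, SimpleGraph.mem_edgeSet, delV_adj] at he'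
        rw [Sym2.map_pair_eq, mem_edgeFinset, SimpleGraph.mem_edgeSet]
        exact he'
      · rw [mem_incidenceFinset] at h
        exact mem_edgeFinset.2 h.1
  have hdisj : Disjoint ((delV G v).edgeFinset.image (Sym2.map (v.succAbove)))
      (G.incidenceFinset v) := by
    rw [Finset.disjoint_left]
    intro e he hi
    obtain ⟨e', he', rfl⟩ := Finset.mem_image.1 he
    obtain ⟨a', b', rfl⟩ := sym2_rep e'
    rw [mem_incidenceFinset] at hi
    have hv := hi.2
    rw [Sym2.map_pair_eq, Sym2.mem_iff] at hv
    rcases hv with h | h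
    · exact Fin.succAbove_ne v a' h.symm
    · exact Fin.succAbove_ne v b' h.symm
  rw [himg, Finset.card_union_of_disjoint hdisj,
    Finset.card_image_of_injective _ (Sym2.map.injective (Fin.succAbove_right_injective)),
    card_incidenceFinset_eq_degree]

lemma mem_cov_image {M : Finset (Sym2 (Fin N))} {x : Fin (N + 1)}
    (hx : x ∈ cov (M.image (Sym2.map (v.succAbove)))) : x ≠ v := by
  rw [mem_cov] at hx
  obtain ⟨e, he, hxe⟩ := hx
  obtain ⟨e', he', rfl⟩ := Finset.mem_image.1 he
  obtain ⟨a', b', rfl⟩ := sym2_rep e'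
  rw [Sym2.map_pair_eq, Sym2.mem_iff] at hxe
  rcases hxe with rfl | rfl
  · exact Fin.succAbove_ne v a'
  · exact Fin.succAbove_ne v b'

lemma isM_image {M : Finset (Sym2 (Fin N))} (hM : IsM (delV G v) M) :
    IsM G (M.image (Sym2.map (v.succAbove))) := by
  constructor
  · intro e he
    simp only [Finset.coe_image, Set.mem_image, Finset.mem_coe] at he
    obtain ⟨e', he', rfl⟩ := he
    obtain ⟨a', b', rfl⟩ := sym2_rep e'
    rw [Sym2.map_pair_eq, SimpleGraph.mem_edgeSet]
    exact (hM.1 he' : (delV G v).Adj a' b')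
  · intro e he f hf hef x hx
    obtain ⟨e', he', rfl⟩ := Finset.mem_image.1 he
    obtain ⟨f', hf', rfl⟩ := Finset.mem_image.1 hf
    have hef' : e' ≠ f' := fun h => hef (by rw [h])
    obtain ⟨a', b', rfl⟩ := sym2_rep e'
    obtain ⟨c', d', rfl⟩ := sym2_rep f'
    rw [Sym2.map_pair_eq, Sym2.mem_iff] at hx
    have hinj := Fin.succAbove_right_injective (p := v)
    rcases hx with ⟨hx1, hx2⟩
    rw [Sym2.map_pair_eq, Sym2.mem_iff] at hx2
    rcases hx1 with rfl | rfl <;> rcases hx2 with h | h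
    · exact hM.2 _ he' _ hf' hef' a' ⟨by simp, by rw [Sym2.mem_iff]; left; exact hinj h⟩
    · exact hM.2 _ he' _ hf' hef' a' ⟨by simp, by rw [Sym2.mem_iff]; right; exact hinj h⟩
    · exact hM.2 _ he' _ hf' hef' b' ⟨by simp, by rw [Sym2.mem_iff]; left; exact hinj h⟩
    · exact hM.2 _ he' _ hf' hef' b' ⟨by simp, by rw [Sym2.mem_iff]; right; exact hinj h⟩

lemma not_has_delV {k : ℕ} (hk : 1 ≤ k) (hdeg : 2 * k - 1 ≤ G.degree v)
    (hno : ¬ HasMatchingOfSize G k) : ¬ HasMatchingOfSize (delV G v) (k - 1) := by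
  intro h
  obtain ⟨M', hM', hcard⟩ := has_iff.1 h
  set M := M'.image (Sym2.map (v.succAbove)) with hMdef
  have hMm : IsM G M := isM_image G v hM'
  have hMcard : M.card = k - 1 := by
    rw [hMdef, Finset.card_image_of_injective _
      (Sym2.map.injective (Fin.succAbove_right_injective)), hcard]
  have hcovcard : (cov M).card = 2 * (k - 1) := by rw [card_cov hMm, hMcard]
  have hW : ∃ w, G.Adj v w ∧ w ∉ cov M := by
    by_contra hc
    push_neg at hc
    have hsub : G.neighborFinset v ⊆ cov M := by
      intro w hw
      exact hc w ((SimpleGraph.mem_neighborFinset G v w).1 hw)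
    have := Finset.card_le_card hsub
    rw [hcovcard] at this
    have hd : G.degree v = (G.neighborFinset v).card := rfl
    omega
  obtain ⟨w, hw, hwcov⟩ := hW
  have hvcov : v ∉ cov M := fun h => (mem_cov_image v h) rfl
  obtain ⟨hM2, hn2⟩ := isM_insert hMm hw hvcov hwcov
  apply hno
  rw [has_iff]
  refine ⟨insert s(v, w) M, hM2, ?_⟩
  rw [Finset.card_insert_of_notMem hn2, hMcard]
  omega

end Delete

/-- deleting vertex `0` from `Snk (N+1) (j+1)` gives `Snk N j`. -/
def snkDelIso (N j : ℕ) : (delV (Snk (N + 1) (j + 1)) 0) ≃g Snk N j := by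
  refine ⟨Equiv.refl _, ?_⟩
  intro a b
  simp only [Equiv.refl_apply]
  rw [Snk_adj, delV_adj, Snk_adj]
  have hsa : (0 : Fin (N + 1)).succAbove a = a.succ := rfl
  have hsb : (0 : Fin (N + 1)).succAbove b = b.succ := rfl
  rw [hsa, hsb, Fin.ne_iff_vne, Fin.ne_iff_vne, Fin.val_succ, Fin.val_succ]
  omega

lemma Snk_deg0 (N j : ℕ) : (Snk (N + 1) (j + 1)).degree 0 = N := by
  have h1 : (Snk (N + 1) (j + 1)).neighborFinset 0 = univ.erase 0 := by
    ext y
    rw [SimpleGraph.mem_neighborFinset, Snk_adj, Finset.mem_erase]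
    simp only [Fin.val_zero]
    constructor
    · rintro ⟨h1, -⟩
      exact ⟨fun h => h1 h.symm, Finset.mem_univ _⟩
    · rintro ⟨h1, -⟩
      exact ⟨fun h => h1 h.symm, Or.inl (by omega)⟩
  have h2 : (Snk (N + 1) (j + 1)).degree 0 = ((Snk (N + 1) (j + 1)).neighborFinset 0).card := rfl
  rw [h2, h1, Finset.card_erase_of_mem (Finset.mem_univ _), Finset.card_univ,
    Fintype.card_fin]
  omega

lemma Snk_step (N j : ℕ) :
    (Snk (N + 1) (j + 1)).edgeFinset.card = (Snk N j).edgeFinset.card + N := by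
  have h1 := card_edge_delV (Snk (N + 1) (j + 1)) 0
  rw [Snk_deg0] at h1
  rw [h1, (snkDelIso N j).card_edgeFinset_eq]

lemma Snk_zero_card (n : ℕ) : (Snk n 0).edgeFinset.card = 0 := by
  rw [Finset.card_eq_zero, Finset.eq_empty_iff_forall_notMem]
  intro e he
  obtain ⟨a, b, rfl⟩ := sym2_rep e
  have := mem_edgeFinset.1 he
  rw [SimpleGraph.mem_edgeSet, Snk_adj] at this
  omega

lemma Snk_card : ∀ j N, j ≤ N → (Snk N j).edgeFinset.card = Nat.choose j 2 + j * (N - j) := by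
  intro j
  induction j with
  | zero => intro N _; rw [Snk_zero_card]; simp
  | succ j ih =>
    intro N hj
    obtain ⟨N', rfl⟩ : ∃ N', N = N' + 1 := ⟨N - 1, by omega⟩
    rw [Snk_step, ih N' (by omega)]
    obtain ⟨a, ha⟩ : ∃ a, N' = j + a := ⟨N' - j, by omega⟩
    subst ha
    rw [Nat.choose_succ_succ j 1, Nat.choose_one_right]
    have e1 : j + a - j = a := by omega
    have e2 : j + a + 1 - (j + 1) = a := by omega
    rw [e1, e2]
    ring

lemma snk_lower {j n : ℕ} (hj : 1 ≤ j) (hn : 5 * j + 5 ≤ 2 * n) :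
    j * (2 * j + 1) < (Snk n j).edgeFinset.card := by
  have hjn : j ≤ n := by omega
  rw [Snk_card j n hjn]
  obtain ⟨a, rfl⟩ : ∃ a, n = j + a := ⟨n - j, by omega⟩
  have e1 : j + a - j = a := by omega
  rw [e1]
  have hc : 2 * Nat.choose j 2 = j * (j - 1) := two_mul_choose_two j
  have hjj : j * j = j * (j - 1) + j := by
    have h : j - 1 + 1 = j := by omega
    have h2 : j * (j - 1 + 1) = j * (j - 1) + j := Nat.mul_succ j (j - 1)
    rw [h] at h2
    omega
  have h1 : j * (3 * j + 5) ≤ j * (2 * a) := Nat.mul_le_mul_left j (by omega)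
  have h2 : j * (3 * j + 5) = 3 * (j * j) + 5 * j := by ring
  have h3 : j * (2 * a) = 2 * (j * a) := by ring
  have h4 : j * (2 * j + 1) = 2 * (j * j) + j := by ring
  omega

noncomputable def buildIso {N k : ℕ} (hk : 1 ≤ k) (G : SimpleGraph (Fin (N + 1)))
    [DecidableRel G.Adj] (v : Fin (N + 1))
    (hdeg : ∀ y, y ≠ v → G.Adj v y) (φ : (delV G v) ≃g Snk N (k - 1)) :
    G ≃g Snk (N + 1) k where
  toEquiv := (finSuccEquiv' v).trans ((Equiv.optionCongr φ.toEquiv).trans (finSuccEquiv' 0).symm)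
  map_rel_iff' := by
    intro a b
    simp only [Equiv.trans_apply]
    have hnone : ((finSuccEquiv' 0).symm ((Equiv.optionCongr φ.toEquiv)
        ((finSuccEquiv' v) v)) : Fin (N + 1)) = 0 := by
      rw [finSuccEquiv'_at]
      simp
    have hsome : ∀ x : Fin N, ((finSuccEquiv' 0).symm ((Equiv.optionCongr φ.toEquiv)
        ((finSuccEquiv' v) (v.succAbove x))) : Fin (N + 1)) = (φ x).succ := by
      intro x
      rw [finSuccEquiv'_succAbove]
      have h1 : (Equiv.optionCongr φ.toEquiv) (some x) = some (φ x) := by simp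
      rw [h1, finSuccEquiv'_symm_some]
      rfl
    rcases eq_or_ne a v with ha | ha
    · rcases eq_or_ne b v with hb | hb
      · rw [ha, hb, hnone]
        apply iff_of_false
        · exact (Snk (N + 1) k).loopless.irrefl 0
        · exact G.loopless.irrefl v
      · obtain ⟨b', hb'⟩ := Fin.exists_succAbove_eq hb
        rw [ha, ← hb', hnone, hsome b']
        apply iff_of_true
        · rw [Snk_adj]
          refine ⟨fun h => Fin.succ_ne_zero _ h.symm, Or.inl ?_⟩
          simp only [Fin.val_zero]
          omega
        · exact hdeg _ (Fin.succAbove_ne v b')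
    · rcases eq_or_ne b v with hb | hb
      · obtain ⟨a', ha'⟩ := Fin.exists_succAbove_eq ha
        rw [hb, ← ha', hnone, hsome a']
        apply iff_of_true
        · rw [Snk_adj]
          refine ⟨Fin.succ_ne_zero _, Or.inr ?_⟩
          simp only [Fin.val_zero]
          omega
        · exact (hdeg _ (Fin.succAbove_ne v a')).symm
      · obtain ⟨a', ha'⟩ := Fin.exists_succAbove_eq ha
        obtain ⟨b', hb'⟩ := Fin.exists_succAbove_eq hb
        rw [← ha', ← hb', hsome a', hsome b']
        have hG : G.Adj (v.succAbove a') (v.succAbove b') ↔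
            (Snk N (k - 1)).Adj (φ a') (φ b') := (φ.map_rel_iff (a := a') (b := b')).symm
        rw [hG, Snk_adj, Snk_adj, Fin.ne_iff_vne, Fin.ne_iff_vne, Fin.val_succ, Fin.val_succ]
        omega

lemma main : ∀ k, ∀ n (G : SimpleGraph (Fin n)) [DecidableRel G.Adj],
    1 ≤ k → 5 * k ≤ 2 * n → ¬ HasMatchingOfSize G k →
    G.edgeFinset.card ≤ (Snk n (k - 1)).edgeFinset.card ∧
      (G.edgeFinset.card = (Snk n (k - 1)).edgeFinset.card ↔
        Nonempty (G ≃g Snk n (k - 1))) := by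
  intro k
  induction k with
  | zero => intro n G _ h; omega
  | succ k ih =>
    intro n G instG h1 h5 hno
    simp only [Nat.add_sub_cancel, Nat.succ_sub_one]
    by_cases hk0 : k = 0
    · subst hk0
      have hempty : G.edgeFinset = ∅ := by
        rw [Finset.eq_empty_iff_forall_notMem]
        intro e he
        obtain ⟨a, b, rfl⟩ := sym2_rep e
        have hadj : G.Adj a b := mem_edgeFinset.1 he
        have := card_lt_of_not_has hno (isM_singleton hadj)
        simp at this
      have hiso : Nonempty (G ≃g Snk n 0) := ⟨⟨Equiv.refl _, by
        intro a b
        simp only [Equiv.refl_apply]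
        apply iff_of_false
        · rw [Snk_adj]
          rintro ⟨-, h | h⟩ <;> omega
        · intro h
          have hmem : s(a, b) ∈ G.edgeFinset := mem_edgeFinset.2 h
          rw [hempty] at hmem
          exact absurd hmem (Finset.notMem_empty _)⟩⟩
      refine ⟨by rw [hempty]; simp, ⟨fun _ => hiso, fun _ => ?_⟩⟩
      rw [hempty, Finset.card_empty, Snk_zero_card]
    · have hk1 : 1 ≤ k := by omega
      obtain ⟨N, rfl⟩ : ∃ N, n = N + 1 := ⟨n - 1, by omega⟩
      by_cases hA : ∃ v, 2 * (k + 1) - 1 ≤ G.degree v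
      · obtain ⟨v, hv⟩ := hA
        have hno' : ¬ HasMatchingOfSize (delV G v) k := by
          have h := not_has_delV G v (k := k + 1) (by omega) hv hno
          simpa using h
        have IH := ih N (delV G v) hk1 (by omega) hno'
        have hstep : (Snk (N + 1) k).edgeFinset.card = (Snk N (k - 1)).edgeFinset.card + N := by
          have h := Snk_step N (k - 1)
          have hk' : k - 1 + 1 = k := by omega
          rw [hk'] at h
          exact h
        have hdel := card_edge_delV G v
        have hdegle : G.degree v ≤ N := by
          have h := G.degree_lt_card_verts v
          rw [Fintype.card_fin] at h
          omega
        have hIH1 := IH.1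
        refine ⟨by omega, ⟨?_, ?_⟩⟩
        · intro heq
          have hG' : (delV G v).edgeFinset.card = (Snk N (k - 1)).edgeFinset.card := by omega
          have hdegN : G.degree v = N := by omega
          obtain ⟨φ⟩ := (IH.2).1 hG'
          have hall : ∀ y, y ≠ v → G.Adj v y := by
            have hsub : G.neighborFinset v ⊆ univ.erase v := by
              intro y hy
              rw [Finset.mem_erase]
              exact ⟨((SimpleGraph.mem_neighborFinset G v y).1 hy).ne', Finset.mem_univ _⟩
            have hcard : (univ.erase v).card ≤ (G.neighborFinset v).card := by
              rw [Finset.card_erase_of_mem (Finset.mem_univ _), Finset.card_univ,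
                Fintype.card_fin]
              have h : G.degree v = (G.neighborFinset v).card := rfl
              omega
            have heq2 := Finset.eq_of_subset_of_card_le hsub hcard
            intro y hy
            have hyy : y ∈ univ.erase v := Finset.mem_erase.2 ⟨hy, Finset.mem_univ _⟩
            rw [← heq2] at hyy
            exact (SimpleGraph.mem_neighborFinset G v y).1 hyy
          exact ⟨buildIso hk1 G v hall φ⟩
        · rintro ⟨ψ⟩
          exact ψ.card_edgeFinset_eq
      · push_neg at hA
        have hdeg : ∀ v, G.degree v ≤ 2 * (k + 1) - 2 := fun v => by have := hA v; omega
        have hled := ledger (k := k + 1) (by omega) hdeg hno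
        have hlow := snk_lower (j := k) (n := N + 1) hk1 (by omega)
        have hled' : G.edgeFinset.card ≤ k * (2 * k + 1) := by
          have hh1 : (k + 1) - 1 = k := by omega
          have hh2 : 2 * (k + 1) - 1 = 2 * k + 1 := by omega
          rwa [hh1, hh2] at hled
        refine ⟨by omega, ⟨fun h => by omega, ?_⟩⟩
        rintro ⟨ψ⟩
        have := ψ.card_edgeFinset_eq
        omega

end EG

theorem stmt_2 (k n : ℕ) (hk : 1 ≤ k) (hn : 5 * k ≤ 2 * n)
    (G : SimpleGraph (Fin n)) [DecidableRel G.Adj]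
    (hM : ¬ HasMatchingOfSize G k) :
    G.edgeFinset.card ≤ (Snk n (k - 1)).edgeFinset.card ∧
      (G.edgeFinset.card = (Snk n (k - 1)).edgeFinset.card ↔
        Nonempty (G ≃g Snk n (k - 1))) :=
  EG.main k n G hk hn hM
end

section
/- Let n ≥ 2k+2 and let G be a simple graph of order n containing S_{n,k} as a spanning subgraph. If G ≠ S_{n,k}, then G contains every tree of order 2k+2 as a subgraph. -/
open SimpleGraph

open Finset


lemma tree_parity {V : Type*} [DecidableEq V] {T : SimpleGraph V} (hT : T.IsTree) {r : V}
    (f : ∀ v, T.Walk r v) (hf : ∀ v, (f v).IsPath)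
    (hf' : ∀ v (q : T.Walk r v), q.IsPath → q = f v)
    {x y : V} (h : T.Adj x y) :
    (f x).length + 1 = (f y).length ∨ (f y).length + 1 = (f x).length := by
  by_cases hy : y ∈ (f x).support
  · right
    have hdrop : ((f x).dropUntil y hy).IsPath := (hf x).dropUntil hy
    have huniq := hT.existsUnique_path y x
    have h1 : (Walk.cons h.symm Walk.nil : T.Walk y x) = (f x).dropUntil y hy :=
      huniq.unique (by simp [Walk.isPath_def, h.ne']) hdrop
    have h2 := congrArg Walk.length ((f x).take_spec hy)
    rw [Walk.length_append, ← h1] at h2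
    have h3 : (f y) = (f x).takeUntil y hy := ((hf' y _ ((hf x).takeUntil hy))).symm
    have h4 := congrArg Walk.length h3
    simp only [Walk.length_cons, Walk.length_nil] at h2
    omega
  · left
    have hcon : ((f x).concat h).IsPath := by
      have h5 : (Walk.cons h.symm (f x).reverse).IsPath := ((hf x).reverse).cons (by simpa using hy)
      have h6 := h5.reverse
      simpa [Walk.reverse_cons, Walk.reverse_reverse, Walk.concat_eq_append] using h6
    have h7 := congrArg Walk.length (hf' y _ hcon)
    rw [Walk.length_concat] at h7
    omega

lemma tree_leaf {V : Type*} [Fintype V] [DecidableEq V] {T : SimpleGraph V} [DecidableRel T.Adj]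
    (hT : T.IsTree) (hcard : 2 ≤ Fintype.card V) :
    ∃ a b, T.Adj a b ∧ ∀ c, T.Adj a c → c = b := by
  have hdegpos : ∀ v : V, 0 < T.degree v := by
    intro v
    rw [T.degree_pos_iff_exists_adj]
    obtain ⟨w, hw⟩ := Fintype.exists_ne_of_one_lt_card (by omega) v
    obtain ⟨p⟩ := hT.isConnected.preconnected v w
    have hnil : ¬ p.Nil := fun hn => hw (Walk.Nil.eq hn).symm
    obtain ⟨u, hadj, _, _⟩ := Walk.not_nil_iff.mp hnil
    exact ⟨u, hadj⟩
  have hsum : ∑ v, T.degree v = 2 * (Fintype.card V - 1) := by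
    rw [T.sum_degrees_eq_twice_card_edges]
    have := hT.card_edgeFinset
    omega
  have hex : ∃ a : V, T.degree a ≤ 1 := by
    by_contra hc
    push_neg at hc
    have : 2 * Fintype.card V ≤ ∑ v, T.degree v := by
      calc 2 * Fintype.card V = ∑ _v : V, 2 := by simp [mul_comm]
        _ ≤ ∑ v, T.degree v := Finset.sum_le_sum (fun v _ => hc v)
    omega
  obtain ⟨a, ha⟩ := hex
  have h1 : T.degree a = 1 := le_antisymm ha (hdegpos a)
  rw [SimpleGraph.degree] at h1
  obtain ⟨b, hb⟩ := Finset.card_eq_one.mp h1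
  refine ⟨a, b, ?_, ?_⟩
  · have : b ∈ T.neighborFinset a := by rw [hb]; simp
    exact (T.mem_neighborFinset a b).mp this
  · intro c hc
    have : c ∈ T.neighborFinset a := (T.mem_neighborFinset a c).mpr hc
    rw [hb] at this
    simpa using this


lemma embed_small {k n m : ℕ} (hkn : k ≤ n) (hm : m ≤ n)
    (G : SimpleGraph (Fin n)) (hsub : Snk n k ≤ G)
    (T : SimpleGraph (Fin m)) (c : Fin m → Bool)
    (hc : ∀ x y, T.Adj x y → c x ≠ c y)
    (hA : (univ.filter (fun x => c x = true)).card ≤ k) :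
    ∃ f : Fin m → Fin n, Function.Injective f ∧
      ∀ a b, T.Adj a b → G.Adj (f a) (f b) := by
  classical
  set A : Finset (Fin m) := univ.filter (fun x => c x = true) with hAdef
  set B : Finset (Fin m) := univ.filter (fun x => c x = false) with hBdef
  have hAB : A.card + B.card = m := by
    have := Finset.card_filter_add_card_filter_not (s := (univ : Finset (Fin m)))
      (p := fun x => c x = true)
    simpa using this
  have memA : ∀ x, c x = true → x ∈ A := by intro x hx; simp [hAdef, hx]
  have memB : ∀ x, ¬ (c x = true) → x ∈ B := by
    intro x hx; simp [hBdef]; exact Bool.eq_false_iff.mpr hx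
  let eA := (A.orderIsoOfFin rfl).symm
  let eB := (B.orderIsoOfFin rfl).symm
  let f : Fin m → Fin n := fun x =>
    if hx : c x = true then ⟨(eA ⟨x, memA x hx⟩).val,
      lt_of_lt_of_le (eA ⟨x, memA x hx⟩).isLt (le_trans hA hkn)⟩
    else ⟨A.card + (eB ⟨x, memB x hx⟩).val,
      by have := (eB ⟨x, memB x hx⟩).isLt; omega⟩
  have hlow : ∀ x (hx : c x = true), (f x : ℕ) < k := by
    intro x hx
    simp only [f, dif_pos hx]
    exact lt_of_lt_of_le (eA ⟨x, memA x hx⟩).isLt hA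
  have hhigh : ∀ x (hx : ¬ (c x = true)), A.card ≤ (f x : ℕ) := by
    intro x hx; simp only [f, dif_neg hx]; omega
  have hinj : Function.Injective f := by
    intro x y hxy
    by_cases hx : c x = true <;> by_cases hy : c y = true
    · simp only [f, dif_pos hx, dif_pos hy, Fin.mk.injEq, Fin.val_inj] at hxy
      have := eA.injective hxy
      simpa using congrArg Subtype.val this
    · exfalso
      have h1 := hlow x hx
      have h2 := hhigh y hy
      rw [hxy] at h1
      have := lt_of_lt_of_le (eA ⟨x, memA x hx⟩).isLt hA
      have h3 : (f x : ℕ) < A.card := by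
        simp only [f, dif_pos hx]; exact (eA ⟨x, memA x hx⟩).isLt
      rw [hxy] at h3; omega
    · exfalso
      have h3 : (f y : ℕ) < A.card := by
        simp only [f, dif_pos hy]; exact (eA ⟨y, memA y hy⟩).isLt
      have h2 := hhigh x hx
      rw [hxy] at h2; omega
    · simp only [f, dif_neg hx, dif_neg hy, Fin.mk.injEq, add_right_inj, Fin.val_inj] at hxy
      have := eB.injective hxy
      simpa using congrArg Subtype.val this
  refine ⟨f, hinj, ?_⟩
  intro a b hab
  have hne : f a ≠ f b := fun h => (T.ne_of_adj hab) (hinj h)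
  have hcab := hc a b hab
  apply hsub
  by_cases ha : c a = true
  · exact ⟨hne, Or.inl (hlow a ha)⟩
  · have ha' : c a = false := Bool.eq_false_iff.mpr ha
    have hb : c b = true := by
      cases hcb : c b
      · exact absurd (by rw [ha', hcb]) hcab
      · rfl
    exact ⟨hne, Or.inr (hlow b hb)⟩


lemma bool3 {p q r : Bool} (h1 : p ≠ q) (h2 : r ≠ q) : p = r := by
  cases p <;> cases q <;> cases r <;> simp_all

lemma embed_big {k n : ℕ} (hn : 2 * k + 2 ≤ n)
    (G : SimpleGraph (Fin n)) (hsub : Snk n k ≤ G)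
    {u v : Fin n} (huv : G.Adj u v) (hu : k ≤ (u : ℕ)) (hv : k ≤ (v : ℕ))
    (T : SimpleGraph (Fin (2 * k + 2))) (c : Fin (2 * k + 2) → Bool)
    (hc : ∀ x y, T.Adj x y → c x ≠ c y)
    {a b : Fin (2 * k + 2)} (hab : T.Adj a b) (hleaf : ∀ z, T.Adj a z → z = b)
    (hAcard : (univ.filter (fun x => c x = c a)).card = k + 1) :
    ∃ f : Fin (2 * k + 2) → Fin n, Function.Injective f ∧
      ∀ x y, T.Adj x y → G.Adj (f x) (f y) := by
  classical
  have hba : b ≠ a := hab.ne'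
  have hcb : c b ≠ c a := fun h => (hc a b hab) (h.symm)
  set A' : Finset (Fin (2 * k + 2)) := (univ.filter (fun x => c x = c a)).erase a with hA'
  set B' : Finset (Fin (2 * k + 2)) := (univ.filter (fun x => ¬ (c x = c a))).erase b with hB'
  have hA'card : A'.card = k := by
    rw [hA', Finset.card_erase_of_mem (by simp), hAcard]; omega
  have hBcard : (univ.filter (fun x => ¬ (c x = c a))).card = k + 1 := by
    have := Finset.card_filter_add_card_filter_not (s := (univ : Finset (Fin (2 * k + 2))))
      (p := fun x => c x = c a)
    simp only [Finset.card_univ, Fintype.card_fin] at this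
    omega
  have hB'card : B'.card = k := by
    rw [hB', Finset.card_erase_of_mem (by simp [hcb]), hBcard]; omega
  -- the pool of non-clique vertices avoiding u, v
  set D : Finset (Fin n) := ((univ.filter (fun i : Fin n => k ≤ (i : ℕ))).erase u).erase v with hD
  have hDcard : k ≤ D.card := by
    have h1 : (univ.filter (fun i : Fin n => ¬ (k ≤ (i : ℕ)))).card ≤ k := by
      have : (univ.filter (fun i : Fin n => ¬ (k ≤ (i : ℕ)))).card =
          ((univ.filter (fun i : Fin n => ¬ (k ≤ (i : ℕ)))).image (fun i : Fin n => (i : ℕ))).card := by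
        rw [Finset.card_image_of_injective _ Fin.val_injective]
      rw [this]
      have hsub2 : ((univ.filter (fun i : Fin n => ¬ (k ≤ (i : ℕ)))).image (fun i : Fin n => (i : ℕ)))
          ⊆ Finset.range k := by
        intro j hj
        simp only [Finset.mem_image, Finset.mem_filter] at hj
        obtain ⟨i, ⟨_, hi⟩, rfl⟩ := hj
        simp [Finset.mem_range]; omega
      simpa using Finset.card_le_card hsub2
    have h2 := Finset.card_filter_add_card_filter_not (s := (univ : Finset (Fin n)))
      (p := fun i : Fin n => k ≤ (i : ℕ))
    simp only [Finset.card_univ, Fintype.card_fin] at h2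
    have h3 : D.card + 2 ≥ (univ.filter (fun i : Fin n => k ≤ (i : ℕ))).card := by
      rw [hD]
      have e1 := Finset.pred_card_le_card_erase
        (s := (univ.filter (fun i : Fin n => k ≤ (i : ℕ)))) (a := u)
      have e2 := Finset.pred_card_le_card_erase
        (s := (univ.filter (fun i : Fin n => k ≤ (i : ℕ))).erase u) (a := v)
      omega
    omega
  let eA := (A'.orderIsoOfFin hA'card).symm
  let eB := (B'.orderIsoOfFin hB'card).symm
  let eD := D.orderEmbOfCardLe hDcard
  have memA : ∀ x, x ≠ a → c x = c a → x ∈ A' := by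
    intro x h1 h2; rw [hA']; exact Finset.mem_erase.mpr ⟨h1, by simp [h2]⟩
  have memB : ∀ x, x ≠ b → ¬ (c x = c a) → x ∈ B' := by
    intro x h1 h2; rw [hB']; exact Finset.mem_erase.mpr ⟨h1, by simp [h2]⟩
  let f : Fin (2 * k + 2) → Fin n := fun x =>
    if hxa : x = a then u
    else if hxb : x = b then v
    else if hx : c x = c a then
      ⟨(eA ⟨x, memA x hxa hx⟩ : Fin k).val, by have := (eA ⟨x, memA x hxa hx⟩).isLt; omega⟩
    else eD (eB ⟨x, memB x hxb hx⟩)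
  have hfa : f a = u := by simp [f]
  have hfb : f b = v := by simp [f, hba]
  have hlow : ∀ x (h1 : x ≠ a) (h2 : x ≠ b) (h3 : c x = c a), (f x : ℕ) < k := by
    intro x h1 h2 h3
    simp only [f, dif_neg h1, dif_neg h2, dif_pos h3]
    exact (eA ⟨x, memA x h1 h3⟩).isLt
  have hmemD : ∀ x (h1 : x ≠ a) (h2 : x ≠ b) (h3 : ¬ (c x = c a)), f x ∈ D := by
    intro x h1 h2 h3
    simp only [f, dif_neg h1, dif_neg h2, dif_neg h3]
    exact D.orderEmbOfCardLe_mem hDcard _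
  have hDprops : ∀ w : Fin n, w ∈ D → k ≤ (w : ℕ) ∧ w ≠ u ∧ w ≠ v := by
    intro w hw
    rw [hD] at hw
    simp only [Finset.mem_erase, Finset.mem_filter, Finset.mem_univ, true_and] at hw
    exact ⟨hw.2.2, hw.2.1, hw.1⟩
  have hinj : Function.Injective f := by
    intro x y hxy
    by_cases hxa : x = a <;> by_cases hya : y = a
    · rw [hxa, hya]
    · exfalso
      rw [hxa, hfa] at hxy
      by_cases hyb : y = b
      · rw [hyb, hfb] at hxy; exact huv.ne hxy
      · by_cases hy : c y = c a
        · have := hlow y hya hyb hy; rw [← hxy] at this; omega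
        · exact (hDprops _ (hmemD y hya hyb hy)).2.1 (by rw [hxy])
    · exfalso
      rw [hya, hfa] at hxy
      by_cases hxb : x = b
      · rw [hxb, hfb] at hxy; exact huv.ne hxy.symm
      · by_cases hx : c x = c a
        · have := hlow x hxa hxb hx; rw [hxy] at this; omega
        · exact (hDprops _ (hmemD x hxa hxb hx)).2.1 hxy
    · by_cases hxb : x = b <;> by_cases hyb : y = b
      · rw [hxb, hyb]
      · exfalso
        rw [hxb, hfb] at hxy
        by_cases hy : c y = c a
        · have := hlow y hya hyb hy; rw [← hxy] at this; omega
        · exact (hDprops _ (hmemD y hya hyb hy)).2.2 (by rw [hxy])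
      · exfalso
        rw [hyb, hfb] at hxy
        by_cases hx : c x = c a
        · have := hlow x hxa hxb hx; rw [hxy] at this; omega
        · exact (hDprops _ (hmemD x hxa hxb hx)).2.2 hxy
      · by_cases hx : c x = c a <;> by_cases hy : c y = c a
        · simp only [f, dif_neg hxa, dif_neg hxb, dif_pos hx,
            dif_neg hya, dif_neg hyb, dif_pos hy, Fin.mk.injEq, Fin.val_inj] at hxy
          have := eA.injective hxy
          simpa using congrArg Subtype.val this
        · exfalso
          have h1 := hlow x hxa hxb hx
          have h2 := (hDprops _ (hmemD y hya hyb hy)).1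
          rw [hxy] at h1; omega
        · exfalso
          have h1 := hlow y hya hyb hy
          have h2 := (hDprops _ (hmemD x hxa hxb hx)).1
          rw [← hxy] at h1; omega
        · simp only [f, dif_neg hxa, dif_neg hxb, dif_neg hx,
            dif_neg hya, dif_neg hyb, dif_neg hy] at hxy
          have := eB.injective (eD.injective hxy)
          simpa using congrArg Subtype.val this
  refine ⟨f, hinj, ?_⟩
  intro x y hxy
  have hne : f x ≠ f y := fun h => (T.ne_of_adj hxy) (hinj h)
  by_cases hxa : x = a
  · have hyb : y = b := hleaf y (hxa ▸ hxy)
    rw [hxa, hyb, hfa, hfb]; exact huv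
  by_cases hya : y = a
  · have hxb : x = b := hleaf x (hya ▸ hxy.symm)
    rw [hya, hxb, hfa, hfb]; exact huv.symm
  by_cases hxb : x = b
  · have hyb : y ≠ b := hxb ▸ hxy.ne'
    have h1 : c y ≠ c b := fun h => hc x y hxy (by rw [hxb]; exact h.symm)
    have hy : c y = c a := bool3 h1 hcb.symm
    rw [hxb, hfb]
    refine hsub ⟨?_, Or.inr (hlow y hya hyb hy)⟩
    intro h
    have := hlow y hya hyb hy
    rw [← h] at this; omega
  by_cases hyb : y = b
  · have h1 : c x ≠ c b := fun h => hc x y hxy (by rw [hyb]; exact h)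
    have hx : c x = c a := bool3 h1 hcb.symm
    rw [hyb, hfb]
    refine hsub ⟨?_, Or.inl (hlow x hxa hxb hx)⟩
    intro h
    have := hlow x hxa hxb hx
    rw [h] at this; omega
  · have hcxy := hc x y hxy
    by_cases hx : c x = c a
    · exact hsub ⟨hne, Or.inl (hlow x hxa hxb hx)⟩
    · have hy : c y = c a := bool3 (fun h => hcxy h.symm) (fun h => hx h.symm)
      exact hsub ⟨hne, Or.inr (hlow y hya hyb hy)⟩

theorem stmt_4 (k n : ℕ) (hn : 2 * k + 2 ≤ n)
    (G : SimpleGraph (Fin n)) (hsub : Snk n k ≤ G) (hne : G ≠ Snk n k) :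
    ∀ T : SimpleGraph (Fin (2 * k + 2)), T.IsTree →
      ∃ f : Fin (2 * k + 2) → Fin n, Function.Injective f ∧
        ∀ a b, T.Adj a b → G.Adj (f a) (f b) := by
  intro T hT
  classical
  -- extract the extra edge
  have hex : ∃ u v : Fin n, G.Adj u v ∧ ¬ (Snk n k).Adj u v := by
    by_contra h
    push_neg at h
    exact hne (le_antisymm (fun x y hxy => h x y hxy) hsub)
  obtain ⟨u, v, huv, hnadj⟩ := hex
  have hune : u ≠ v := huv.ne
  have huvk : k ≤ (u : ℕ) ∧ k ≤ (v : ℕ) := by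
    by_contra h
    push_neg at h
    apply hnadj
    refine ⟨hune, ?_⟩
    by_cases h1 : k ≤ (u : ℕ)
    · exact Or.inr (by omega)
    · exact Or.inl (by omega)
  -- get a leaf
  have hcard2 : 2 ≤ Fintype.card (Fin (2 * k + 2)) := by simp
  obtain ⟨a, b, hab, hleaf⟩ := tree_leaf hT hcard2
  -- 2-coloring from path parity
  choose p hp hp' using fun w => hT.existsUnique_path a w
  set c : Fin (2 * k + 2) → Bool := fun x => decide ((p x).length % 2 = 1) with hcdef
  have hc : ∀ x y, T.Adj x y → c x ≠ c y := by
    intro x y hxy hcc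
    have := tree_parity hT p hp hp' hxy
    rw [hcdef] at hcc
    simp only [decide_eq_decide] at hcc
    omega
  set Aa : Finset (Fin (2 * k + 2)) := univ.filter (fun x => c x = c a) with hAa
  set Bb : Finset (Fin (2 * k + 2)) := univ.filter (fun x => ¬ (c x = c a)) with hBb
  have hsum : Aa.card + Bb.card = 2 * k + 2 := by
    have := Finset.card_filter_add_card_filter_not
      (s := (univ : Finset (Fin (2 * k + 2)))) (p := fun x => c x = c a)
    simpa using this
  by_cases hA : Aa.card ≤ k
  · -- the color class of `a` is small
    refine embed_small (by omega) hn G hsub T (fun x => c x == c a) ?_ ?_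
    · intro x y hxy h
      apply hc x y hxy
      have h1 := congrArg (fun t => t = true) h
      simp only [beq_iff_eq] at h1
      by_cases h2 : c x = c a <;> by_cases h3 : c y = c a
      · exact h2.trans h3.symm
      · simp [h2, h3] at h1
      · simp [h2, h3] at h1
      · exact bool3 (p := c x) (q := c a) (r := c y) h2 h3 |>.symm ▸ rfl
    · have : univ.filter (fun x => (c x == c a) = true) = Aa := by
        rw [hAa]; apply Finset.filter_congr; intro x _; simp
      rw [this]; exact hA
  by_cases hB : Bb.card ≤ k
  · refine embed_small (by omega) hn G hsub T (fun x => !(c x == c a)) ?_ ?_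
    · intro x y hxy h
      apply hc x y hxy
      by_cases h2 : c x = c a <;> by_cases h3 : c y = c a
      · exact h2.trans h3.symm
      · simp [h2, h3] at h
      · simp [h2, h3] at h
      · exact bool3 (p := c x) (q := c a) (r := c y) h2 h3
    · have : univ.filter (fun x => (!(c x == c a)) = true) = Bb := by
        rw [hBb]; apply Finset.filter_congr; intro x _; simp
      rw [this]; exact hB
  · have hAcard : Aa.card = k + 1 := by omega
    exact embed_big hn G hsub huv huvk.1 huvk.2 T c hc hab hleaf hAcard
end

section
/- Let n ≥ 2k+2, and let S⁺_{2k+2,k} be the graph obtained from S_{2k+2,k} by adding one edge inside the independent set. Then S⁺_{2k+2,k} contains every tree of order 2k+2 as a subgraph. -/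
open SimpleGraph

/-- `S⁺_{2k+2,k}`: the join of `K_k` (the first `k` vertices) with an independent set of
`k + 2` vertices, plus one extra edge (between vertices `k` and `k+1`) inside the
independent part. -/
def SnkPlus (k : ℕ) : SimpleGraph (Fin (2 * k + 2)) :=
  SimpleGraph.fromRel (fun i j => (i : ℕ) < k ∨ ((i : ℕ) = k ∧ (j : ℕ) = k + 1))

/-- A permutation carrying a finset onto another finset of the same cardinality. -/
lemma exists_perm_iff {α : Type*} [Fintype α] [DecidableEq α] (A C : Finset α)
    (h : A.card = C.card) : ∃ σ : Equiv.Perm α, ∀ v, v ∈ A ↔ σ v ∈ C := by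
  classical
  have h1 : Fintype.card {x // x ∈ A} = Fintype.card {x // x ∈ C} := by
    simp [Fintype.card_coe, h]
  have h2 : Fintype.card {x // ¬ x ∈ A} = Fintype.card {x // ¬ x ∈ C} := by
    rw [Fintype.card_subtype_compl, Fintype.card_subtype_compl, h1]
  let e1 : {x // x ∈ A} ≃ {x // x ∈ C} := Fintype.equivOfCardEq h1
  let e2 : {x // ¬ x ∈ A} ≃ {x // ¬ x ∈ C} := Fintype.equivOfCardEq h2
  refine ⟨Equiv.subtypeCongr e1 e2, fun v => ?_⟩
  constructor
  · intro hv
    have : Equiv.subtypeCongr e1 e2 v = (e1 ⟨v, hv⟩ : α) := by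
      simp [Equiv.subtypeCongr, hv]
    rw [this]
    exact (e1 ⟨v, hv⟩).2
  · intro hσ
    by_contra hv
    have : Equiv.subtypeCongr e1 e2 v = (e2 ⟨v, hv⟩ : α) := by
      simp [Equiv.subtypeCongr, hv]
    rw [this] at hσ
    exact (e2 ⟨v, hv⟩).2 hσ

lemma card_filter_lt (n m : ℕ) (h : m ≤ n) :
    ((Finset.univ : Finset (Fin n)).filter (fun i : Fin n => (i : ℕ) < m)).card = m := by
  have heq : (Finset.univ : Finset (Fin n)).filter (fun i : Fin n => (i : ℕ) < m)
      = Finset.map (Fin.castLEEmb h) Finset.univ := by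
    ext j
    simp only [Finset.mem_filter, Finset.mem_univ, true_and, Finset.mem_map]
    constructor
    · intro hj
      exact ⟨⟨(j : ℕ), hj⟩, by ext; simp [Fin.castLEEmb]⟩
    · rintro ⟨i, _, rfl⟩
      simpa [Fin.castLEEmb] using i.2
  rw [heq, Finset.card_map, Finset.card_univ, Fintype.card_fin]

/-- Every tree is properly 2-colorable. -/
lemma tree_two_coloring {V : Type*} {T : SimpleGraph V} (hT : T.IsTree) :
    ∃ c : V → Bool, ∀ a b, T.Adj a b → c a ≠ c b := by
  classical
  obtain ⟨r⟩ := hT.isConnected.nonempty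
  choose P hP hPu using fun v => hT.existsUnique_path r v
  have key : ∀ a b, T.Adj a b →
      (P a).length = (P b).length + 1 ∨ (P b).length = (P a).length + 1 := by
    intro a b hab
    by_cases hb : b ∈ (P a).support
    · left
      have hQ : ((P a).takeUntil b hb).IsPath := (hP a).takeUntil hb
      have hR : ((P a).dropUntil b hb).IsPath := (hP a).dropUntil hb
      have hQP : (P a).takeUntil b hb = P b := hPu b _ hQ
      have hS : (Walk.cons hab.symm Walk.nil : T.Walk b a).IsPath := by
        simp [Walk.cons_isPath_iff, (hab.ne.symm : b ≠ a)]
      have hRS : (P a).dropUntil b hb = Walk.cons hab.symm Walk.nil :=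
        (hT.existsUnique_path b a).unique hR hS
      have hlen := congrArg Walk.length ((P a).take_spec hb)
      rw [Walk.length_append, hQP, hRS] at hlen
      simpa using hlen.symm
    · right
      have hW : ((P a).concat hab).IsPath := by
        rw [← Walk.isPath_reverse_iff, Walk.reverse_concat, Walk.cons_isPath_iff]
        exact ⟨(hP a).reverse, by simpa [Walk.support_reverse] using hb⟩
      have := hPu b _ hW
      rw [← this, Walk.length_concat]
  refine ⟨fun v => decide ((P v).length % 2 = 0), fun a b hab => ?_⟩
  intro hcc
  have h2 := key a b hab
  by_cases hx : (P a).length % 2 = 0 <;> by_cases hy : (P b).length % 2 = 0 <;>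
    simp [hx, hy] at hcc ⊢ <;> omega

/-- Every tree on at least two vertices has a leaf. -/
lemma tree_exists_leaf {n : ℕ} {T : SimpleGraph (Fin (n + 2))} (hT : T.IsTree) :
    ∃ ℓ p, T.Adj ℓ p ∧ ∀ b, T.Adj ℓ b → b = p := by
  classical
  have hcard : T.edgeFinset.card = n + 1 := by
    have := hT.card_edgeFinset
    rw [Fintype.card_fin] at this
    omega
  have hdeg1 : ∀ v, 0 < T.degree v := by
    intro v
    rw [T.degree_pos_iff_exists_adj]
    obtain ⟨w, hw⟩ := Fintype.exists_ne_of_one_lt_card (by rw [Fintype.card_fin]; omega) v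
    obtain ⟨q⟩ := hT.isConnected.preconnected v w
    cases q with
    | nil => exact absurd rfl hw.symm
    | cons h _ => exact ⟨_, h⟩
  have hleaf : ∃ ℓ, T.degree ℓ = 1 := by
    by_contra hno
    push_neg at hno
    have h2 : ∀ v, 2 ≤ T.degree v := fun v => by
      have := hdeg1 v; have := hno v; omega
    have hsum := T.sum_degrees_eq_twice_card_edges
    have hge : (n + 2) * 2 ≤ ∑ v, T.degree v := by
      calc (n + 2) * 2 = ∑ _v : Fin (n + 2), 2 := by
            simp [Finset.sum_const, Finset.card_univ, Nat.mul_comm]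
        _ ≤ ∑ v, T.degree v := Finset.sum_le_sum fun v _ => h2 v
    rw [hsum, hcard] at hge
    omega
  obtain ⟨ℓ, hℓ⟩ := hleaf
  have hℓ' : (T.neighborFinset ℓ).card = 1 := hℓ
  obtain ⟨p, hp⟩ := Finset.card_eq_one.mp hℓ'
  refine ⟨ℓ, p, ?_, ?_⟩
  · have : p ∈ T.neighborFinset ℓ := by rw [hp]; simp
    exact (T.mem_neighborFinset ℓ p).mp this
  · intro b hb
    have : b ∈ T.neighborFinset ℓ := (T.mem_neighborFinset ℓ b).mpr hb
    rw [hp] at this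
    simpa using this

lemma case_small {k : ℕ} (T : SimpleGraph (Fin (2 * k + 2))) (c : Fin (2 * k + 2) → Bool)
    (hc : ∀ a b, T.Adj a b → c a ≠ c b)
    (hm : ((Finset.univ : Finset (Fin (2 * k + 2))).filter (fun v => c v = true)).card ≤ k) :
    ∃ f : Fin (2 * k + 2) → Fin (2 * k + 2), Function.Injective f ∧
      ∀ a b, T.Adj a b → (SnkPlus k).Adj (f a) (f b) := by
  classical
  set A := (Finset.univ : Finset (Fin (2 * k + 2))).filter (fun v => c v = true) with hA
  have hmn : A.card ≤ 2 * k + 2 := by omega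
  obtain ⟨σ, hσ⟩ := exists_perm_iff A
    (Finset.univ.filter (fun i : Fin (2 * k + 2) => (i : ℕ) < A.card))
    (by rw [card_filter_lt _ _ hmn])
  have main : ∀ a b, T.Adj a b → c a = true → (SnkPlus k).Adj (σ a) (σ b) := by
    intro a b hab hca
    have haA : a ∈ A := by simp [hA, hca]
    have h1 : ((σ a : Fin (2 * k + 2)) : ℕ) < A.card := by
      have := (hσ a).mp haA
      simpa using this
    rw [SnkPlus, fromRel_adj]
    exact ⟨σ.injective.ne hab.ne, Or.inl (Or.inl (by omega))⟩
  refine ⟨σ, σ.injective, fun a b hab => ?_⟩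
  by_cases h : c a = true
  · exact main a b hab h
  · have hcb : c b = true := by
      by_contra h'
      exact hc a b hab ((Bool.not_eq_true _).mp h ▸ (Bool.not_eq_true _).mp h' ▸ rfl)
    exact (main b a hab.symm hcb).symm

lemma case_eq {k : ℕ} (T : SimpleGraph (Fin (2 * k + 2))) (c : Fin (2 * k + 2) → Bool)
    (hc : ∀ a b, T.Adj a b → c a ≠ c b) (ℓ p : Fin (2 * k + 2)) (hlp : T.Adj ℓ p)
    (huniq : ∀ b, T.Adj ℓ b → b = p) (hcl : c ℓ = true)
    (hm : ((Finset.univ : Finset (Fin (2 * k + 2))).filter (fun v => c v = true)).card = k + 1) :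
    ∃ f : Fin (2 * k + 2) → Fin (2 * k + 2), Function.Injective f ∧
      ∀ a b, T.Adj a b → (SnkPlus k).Adj (f a) (f b) := by
  classical
  set A := (Finset.univ : Finset (Fin (2 * k + 2))).filter (fun v => c v = true) with hA
  obtain ⟨σ, hσ⟩ := exists_perm_iff A
    (Finset.univ.filter (fun i : Fin (2 * k + 2) => (i : ℕ) < k + 1))
    (by rw [card_filter_lt _ _ (by omega), hm])
  have hiff : ∀ v, c v = true ↔ ((σ v : Fin (2 * k + 2)) : ℕ) < k + 1 := by
    intro v
    have := hσ v
    simpa [hA] using this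
  set vk : Fin (2 * k + 2) := ⟨k, by omega⟩ with hvk
  set vk1 : Fin (2 * k + 2) := ⟨k + 1, by omega⟩ with hvk1
  set f : Equiv.Perm (Fin (2 * k + 2)) :=
    σ.trans ((Equiv.swap (σ ℓ) vk).trans (Equiv.swap (σ p) vk1)) with hf
  have hσℓ : ((σ ℓ : Fin (2 * k + 2)) : ℕ) < k + 1 := (hiff ℓ).mp hcl
  have hcp : c p = false := by
    by_contra h'
    exact hc ℓ p hlp (hcl.trans ((Bool.not_eq_false _).mp h').symm)
  have hσp : ¬ ((σ p : Fin (2 * k + 2)) : ℕ) < k + 1 := by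
    intro h
    have := (hiff p).mpr h
    rw [hcp] at this
    exact absurd this (by simp)
  have hfℓ : f ℓ = vk := by
    rw [hf]
    simp only [Equiv.trans_apply]
    rw [Equiv.swap_apply_left]
    apply Equiv.swap_apply_of_ne_of_ne
    · intro h; rw [← h] at hσp; exact hσp (by simp [hvk])
    · intro h
      have : (k : ℕ) = k + 1 := congrArg Fin.val (hvk ▸ hvk1 ▸ h)
      omega
  have hfp : f p = vk1 := by
    rw [hf]
    simp only [Equiv.trans_apply]
    have hswap : (Equiv.swap (σ ℓ) vk) (σ p) = σ p := by
      apply Equiv.swap_apply_of_ne_of_ne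
      · exact fun h => hσp (h ▸ hσℓ)
      · intro h
        apply hσp
        rw [h]
        simp [hvk]
    rw [hswap, Equiv.swap_apply_left]
  have hfa : ∀ a, c a = true → a ≠ ℓ → ((f a : Fin (2 * k + 2)) : ℕ) < k := by
    intro a hca haℓ
    have hσa : ((σ a : Fin (2 * k + 2)) : ℕ) < k + 1 := (hiff a).mp hca
    have hne : σ a ≠ σ ℓ := fun h => haℓ (σ.injective h)
    have hx : ∃ x : Fin (2 * k + 2), Equiv.swap (σ ℓ) vk (σ a) = x ∧ (x : ℕ) < k := by
      by_cases h : σ a = vk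
      · refine ⟨σ ℓ, by rw [h, Equiv.swap_apply_right], ?_⟩
        have : σ ℓ ≠ vk := fun h' => hne (h.trans h'.symm)
        have hval : ((σ ℓ : Fin (2 * k + 2)) : ℕ) ≠ k := fun h' => this (Fin.ext h')
        omega
      · refine ⟨σ a, Equiv.swap_apply_of_ne_of_ne hne h, ?_⟩
        have hval : ((σ a : Fin (2 * k + 2)) : ℕ) ≠ k := fun h' => h (Fin.ext h')
        omega
    obtain ⟨x, hx1, hx2⟩ := hx
    rw [hf]
    simp only [Equiv.trans_apply]
    rw [hx1, Equiv.swap_apply_of_ne_of_ne]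
    · exact hx2
    · intro h; rw [← h] at hσp; omega
    · intro h
      have := congrArg Fin.val h
      simp [hvk1] at this
      omega
  have main : ∀ a b, T.Adj a b → c a = true → (SnkPlus k).Adj (f a) (f b) := by
    intro a b hab hca
    by_cases haℓ : a = ℓ
    · subst haℓ
      have hbp : b = p := huniq b hab
      subst hbp
      rw [SnkPlus, fromRel_adj, hfℓ, hfp]
      refine ⟨?_, Or.inl (Or.inr ⟨rfl, rfl⟩)⟩
      intro h
      have := congrArg Fin.val h
      simp [hvk, hvk1] at this
    · rw [SnkPlus, fromRel_adj]
      exact ⟨f.injective.ne hab.ne, Or.inl (Or.inl (hfa a hca haℓ))⟩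
  refine ⟨f, f.injective, fun a b hab => ?_⟩
  by_cases h : c a = true
  · exact main a b hab h
  · have hcb : c b = true := by
      by_contra h'
      exact hc a b hab ((Bool.not_eq_true _).mp h ▸ (Bool.not_eq_true _).mp h' ▸ rfl)
    exact (main b a hab.symm hcb).symm

theorem stmt_5 (k : ℕ) :
    ∀ T : SimpleGraph (Fin (2 * k + 2)), T.IsTree →
      ∃ f : Fin (2 * k + 2) → Fin (2 * k + 2), Function.Injective f ∧
        ∀ a b, T.Adj a b → (SnkPlus k).Adj (f a) (f b) := by
  intro T hT
  classical
  obtain ⟨c, hc⟩ := tree_two_coloring hT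
  set A := (Finset.univ : Finset (Fin (2 * k + 2))).filter (fun v => c v = true) with hA
  have hc' : ∀ a b, T.Adj a b → (!c a) ≠ (!c b) := by
    intro a b hab h
    exact hc a b hab (Bool.not_inj h)
  set c' : Fin (2 * k + 2) → Bool := fun v => !c v with hc'def
  set B := (Finset.univ : Finset (Fin (2 * k + 2))).filter (fun v => c' v = true) with hB
  have hsplit : A.card + B.card = 2 * k + 2 := by
    have h1 : B = (Finset.univ : Finset (Fin (2 * k + 2))).filter (fun v => ¬ (c v = true)) := by
      rw [hB]
      apply Finset.filter_congr
      intro v _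
      simp [hc'def]
    rw [h1, hA, Finset.card_filter_add_card_filter_not]
    simp
  by_cases h1 : A.card ≤ k
  · exact case_small T c hc h1
  by_cases h2 : k + 2 ≤ A.card
  · exact case_small T c' hc' (by rw [← hB]; omega)
  have hAk : A.card = k + 1 := by omega
  obtain ⟨ℓ, p, hlp, huniq⟩ := tree_exists_leaf (n := 2 * k) hT
  by_cases hcl : c ℓ = true
  · exact case_eq T c hc ℓ p hlp huniq hcl hAk
  · have hclf : c ℓ = false := by revert hcl; cases c ℓ <;> simp
    exact case_eq T c' hc' ℓ p hlp huniq (by simp [hc'def, hclf]) (by rw [← hB]; omega)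
end

section
/- Let G be a graph, u a vertex of G, and let L be the graph on vertex set N¹(u) ∪ N²(u) whose edges are the edges of G inside N¹(u) together with the edges of G between N¹(u) and N²(u). Let f(x) = x² - (k-1)x - k(n-k), B = f(A(G)), and B_u the column sum of B at u, where n = |V(G)|. Then B_u = Σ_{x ∈ N¹(u)} d_L(x) - (k-2)·d_G(u) - k(n-k). -/
open SimpleGraph Finset
open scoped Classical

noncomputable section

/-- The set of vertices at distance exactly `i` from `u` in `G`. -/
def distSet {n : ℕ} (G : SimpleGraph (Fin n)) (u : Fin n) (i : ℕ) : Finset (Fin n) :=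
  Finset.univ.filter (fun y => G.dist u y = i)

/-- The graph `L` on `N¹(u) ∪ N²(u)` whose edges are the edges of `G` inside `N¹(u)`
together with the edges of `G` between `N¹(u)` and `N²(u)` (as a graph on all of `Fin n`;
vertices outside `N¹(u) ∪ N²(u)` are isolated). -/
def Lgraph {n : ℕ} (G : SimpleGraph (Fin n)) (u : Fin n) : SimpleGraph (Fin n) where
  Adj x y := G.Adj x y ∧
    ((x ∈ distSet G u 1 ∧ y ∈ distSet G u 1) ∨ (x ∈ distSet G u 1 ∧ y ∈ distSet G u 2) ∨
      (x ∈ distSet G u 2 ∧ y ∈ distSet G u 1))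
  symm := by
    constructor
    intro x y ⟨h1, h2⟩
    exact ⟨h1.symm, by tauto⟩
  loopless := by constructor; intro x ⟨h1, _⟩; exact G.irrefl h1


lemma distSet_one {n : ℕ} (G : SimpleGraph (Fin n)) (u : Fin n) :
    distSet G u 1 = G.neighborFinset u := by
  ext y
  simp [distSet, SimpleGraph.dist_eq_one_iff_adj]

lemma L_neighborFinset {n : ℕ} (G : SimpleGraph (Fin n)) (u x : Fin n)
    (hx : G.Adj u x) :
    (Lgraph G u).neighborFinset x = G.neighborFinset x \ {u} := by
  ext y
  simp only [mem_neighborFinset]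
  simp only [mem_neighborFinset, mem_sdiff, mem_singleton, Lgraph, distSet,
    mem_filter, mem_univ, true_and]
  constructor
  · rintro ⟨hadj, h⟩
    refine ⟨hadj, ?_⟩
    rintro rfl
    rcases h with ⟨_, h1⟩ | ⟨_, h1⟩ | ⟨_, h1⟩ <;> simp [SimpleGraph.dist_self] at h1
  · rintro ⟨hadj, hne⟩
    refine ⟨hadj, ?_⟩
    have hx1 : G.dist u x = 1 := SimpleGraph.dist_eq_one_iff_adj.mpr hx
    have hle : G.dist u y ≤ 2 := by
      have := SimpleGraph.dist_le (SimpleGraph.Walk.cons hx hadj.toWalk)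
      simpa using this
    have hpos : 0 < G.dist u y :=
      SimpleGraph.Reachable.pos_dist_of_ne ⟨(SimpleGraph.Walk.cons hx hadj.toWalk)⟩ (Ne.symm hne)
    have h12 : G.dist u y = 1 ∨ G.dist u y = 2 := by omega
    rcases h12 with h | h
    · exact Or.inl ⟨hx1, h⟩
    · exact Or.inr (Or.inl ⟨hx1, h⟩)

lemma L_degree {n : ℕ} (G : SimpleGraph (Fin n)) (u x : Fin n) (hx : G.Adj u x) :
    ((G.degree x : ℝ)) = ((Lgraph G u).degree x : ℝ) + 1 := by
  have h1 := L_neighborFinset G u x hx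
  have hu : u ∈ G.neighborFinset x := by simpa using hx.symm
  have : (Lgraph G u).degree x = G.degree x - 1 := by
    rw [SimpleGraph.degree, h1, Finset.card_sdiff_of_subset (Finset.singleton_subset_iff.mpr hu)]
    rw [Finset.card_singleton, SimpleGraph.card_neighborFinset_eq_degree]
  rw [this]
  have hpos : 1 ≤ G.degree x := by
    rw [← SimpleGraph.card_neighborFinset_eq_degree]
    exact Finset.card_pos.mpr ⟨u, hu⟩
  push_cast [Nat.cast_sub hpos]
  ring

lemma col_sum_adj {n : ℕ} (G : SimpleGraph (Fin n)) (j : Fin n) :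
    ∑ i, G.adjMatrix ℝ i j = (G.degree j : ℝ) := by
  simp only [SimpleGraph.adjMatrix_apply]
  rw [Finset.sum_boole]
  congr 1
  rw [← SimpleGraph.card_neighborFinset_eq_degree]
  congr 1
  ext i
  simp [SimpleGraph.adj_comm]

theorem stmt_10 (n k : ℕ) (G : SimpleGraph (Fin n)) (u : Fin n)
    (B : Matrix (Fin n) (Fin n) ℝ)
    (hB : B = G.adjMatrix ℝ * G.adjMatrix ℝ - ((k : ℝ) - 1) • G.adjMatrix ℝ -
      ((k : ℝ) * ((n : ℝ) - k)) • (1 : Matrix (Fin n) (Fin n) ℝ)) :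
    ∑ i, B i u = (∑ x ∈ distSet G u 1, ((Lgraph G u).degree x : ℝ)) -
      ((k : ℝ) - 2) * (G.degree u : ℝ) - (k : ℝ) * ((n : ℝ) - k) := by
  subst hB
  have h2 : ∑ i, (G.adjMatrix ℝ * G.adjMatrix ℝ) i u
      = ∑ j ∈ G.neighborFinset u, (G.degree j : ℝ) := by
    simp only [SimpleGraph.mul_adjMatrix_apply]
    refine Finset.sum_comm.trans ?_
    exact Finset.sum_congr rfl fun j _ => col_sum_adj G j
  have h3 : ∑ j ∈ G.neighborFinset u, (G.degree j : ℝ)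
      = (∑ x ∈ distSet G u 1, ((Lgraph G u).degree x : ℝ)) + (G.degree u : ℝ) := by
    rw [distSet_one]
    have : (G.degree u : ℝ) = ∑ _x ∈ G.neighborFinset u, (1 : ℝ) := by
      rw [← SimpleGraph.card_neighborFinset_eq_degree G u]; simp
    rw [this, ← Finset.sum_add_distrib]
    refine Finset.sum_congr rfl fun j hj => ?_
    rw [L_degree G u j (by simpa using hj)]
  simp only [Matrix.sub_apply, Matrix.smul_apply, smul_eq_mul, Finset.sum_sub_distrib]
  rw [h2, h3, ← Finset.mul_sum, ← Finset.mul_sum, col_sum_adj G u]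
  have h4 : ∑ i, (1 : Matrix (Fin n) (Fin n) ℝ) i u = 1 := by
    simp [Matrix.one_apply]
  rw [h4]
  ring

end
end
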